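/- arXiv:2206.06995 — 4 statements merged into one kernel-verified Lean document; each statement's English description precedes it below -/
import Mathlib

section
/- Let g : ℝ^{d₁} × ℝ^{d₂} → ℝ be twice continuously differentiable with ∇²_{yy} g(x,y) ⪰ μ_g I and ‖∇²_{xy} g(x,y)‖ ≤ C_{xy} (operator norm) for all (x,y), where μ_g, C_{xy} > 0. Then the map x ↦ y*(x), where y*(x) is the unique minimizer of y ↦ g(x,y), is Lipschitz continuous with Lipschitz constant C_{xy}/μ_g. -/
open scoped RealInnerProductSpace

section Aux

open InnerProductSpace ContinuousLinearMap

variable {E₁ E₂ : Type*} [NormedAddCommGroup E₁] [InnerProductSpace ℝ E₁]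
  [NormedAddCommGroup E₂] [InnerProductSpace ℝ E₂] [CompleteSpace E₁] [CompleteSpace E₂]

/-- The continuous linear map sending `ℓ : (E₁ × E₂) →L[ℝ] ℝ` to the vector representing
`ℓ ∘ inr` in `E₂`. -/
noncomputable def rightRep : ((E₁ × E₂) →L[ℝ] ℝ) →L[ℝ] E₂ :=
  ((toDual ℝ E₂).symm.toContinuousLinearEquiv.toContinuousLinearMap).comp
    ((ContinuousLinearMap.compL ℝ E₂ (E₁ × E₂) ℝ).flip (inr ℝ E₁ E₂))

/-- The continuous linear map sending `ℓ : (E₁ × E₂) →L[ℝ] ℝ` to the vector representing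
`ℓ ∘ inl` in `E₁`. -/
noncomputable def leftRep : ((E₁ × E₂) →L[ℝ] ℝ) →L[ℝ] E₁ :=
  ((toDual ℝ E₁).symm.toContinuousLinearEquiv.toContinuousLinearMap).comp
    ((ContinuousLinearMap.compL ℝ E₁ (E₁ × E₂) ℝ).flip (inl ℝ E₁ E₂))

lemma rightRep_apply (ℓ : (E₁ × E₂) →L[ℝ] ℝ) :
    (rightRep ℓ : E₂) = (toDual ℝ E₂).symm (ℓ.comp (inr ℝ E₁ E₂)) := rfl

lemma leftRep_apply (ℓ : (E₁ × E₂) →L[ℝ] ℝ) :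
    (leftRep ℓ : E₁) = (toDual ℝ E₁).symm (ℓ.comp (inl ℝ E₁ E₂)) := rfl

lemma inner_rightRep (ℓ : (E₁ × E₂) →L[ℝ] ℝ) (v : E₂) :
    ⟪(rightRep ℓ : E₂), v⟫ = ℓ (0, v) := by
  rw [rightRep_apply, toDual_symm_apply]; rfl

lemma inner_leftRep (ℓ : (E₁ × E₂) →L[ℝ] ℝ) (u : E₁) :
    ⟪(leftRep ℓ : E₁), u⟫ = ℓ (u, 0) := by
  rw [leftRep_apply, toDual_symm_apply]; rfl

variable (g : E₁ × E₂ → ℝ)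

lemma grad_right_eq (hg : ContDiff ℝ 2 g) (x : E₁) (y : E₂) :
    gradient (fun y' => g (x, y')) y = rightRep (fderiv ℝ g (x, y)) := by
  have h : HasFDerivAt (fun y' => g (x, y'))
      ((fderiv ℝ g (x, y)).comp (inr ℝ E₁ E₂)) y :=
    ((hg.differentiable two_ne_zero (x, y)).hasFDerivAt).comp y
      (hasFDerivAt_prodMk_right x y)
  rw [gradient, h.fderiv, rightRep_apply]

lemma grad_left_eq (hg : ContDiff ℝ 2 g) (x : E₁) (y : E₂) :
    gradient (fun x' => g (x', y)) x = leftRep (fderiv ℝ g (x, y)) := by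
  have h : HasFDerivAt (fun x' => g (x', y))
      ((fderiv ℝ g (x, y)).comp (inl ℝ E₁ E₂)) x :=
    ((hg.differentiable two_ne_zero (x, y)).hasFDerivAt).comp x
      (hasFDerivAt_prodMk_left x y)
  rw [gradient, h.fderiv, leftRep_apply]

lemma hasFDerivAt_grad_right_x (hg : ContDiff ℝ 2 g) (x : E₁) (y : E₂) :
    HasFDerivAt (fun x' => gradient (fun y' => g (x', y')) y)
      ((rightRep : ((E₁ × E₂) →L[ℝ] ℝ) →L[ℝ] E₂).comp
        ((fderiv ℝ (fderiv ℝ g) (x, y)).comp (inl ℝ E₁ E₂))) x := by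
  have h1 :=
    (((hg.fderiv_right (m := 1) (by norm_num)).differentiable one_ne_zero (x, y)).hasFDerivAt).comp x
      (hasFDerivAt_prodMk_left (𝕜 := ℝ) x y)
  have h2 := (rightRep (E₁ := E₁) (E₂ := E₂)).hasFDerivAt.comp x h1
  have heq : (fun x' : E₁ => gradient (fun y' => g (x', y')) y)
      = fun x' : E₁ => rightRep (fderiv ℝ g (x', y)) :=
    funext fun x' => grad_right_eq g hg x' y
  rw [heq]; exact h2

lemma hasFDerivAt_grad_left_y (hg : ContDiff ℝ 2 g) (x : E₁) (y : E₂) :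
    HasFDerivAt (fun y' => gradient (fun x' => g (x', y')) x)
      ((leftRep : ((E₁ × E₂) →L[ℝ] ℝ) →L[ℝ] E₁).comp
        ((fderiv ℝ (fderiv ℝ g) (x, y)).comp (inr ℝ E₁ E₂))) y := by
  have h1 :=
    (((hg.fderiv_right (m := 1) (by norm_num)).differentiable one_ne_zero (x, y)).hasFDerivAt).comp y
      (hasFDerivAt_prodMk_right (𝕜 := ℝ) x y)
  have h2 := (leftRep (E₁ := E₁) (E₂ := E₂)).hasFDerivAt.comp y h1
  have heq : (fun y' : E₂ => gradient (fun x' => g (x', y')) x)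
      = fun y' : E₂ => leftRep (fderiv ℝ g (x, y')) :=
    funext fun y' => grad_left_eq g hg x y'
  rw [heq]; exact h2

/-- Symmetry of the mixed second derivatives, in gradient form. -/
lemma mixed_symm (hg : ContDiff ℝ 2 g) (x : E₁) (y : E₂) (u : E₁) (v : E₂) :
    ⟪fderiv ℝ (fun x' => gradient (fun y' => g (x', y')) y) x u, v⟫
      = ⟪fderiv ℝ (fun y' => gradient (fun x' => g (x', y')) x) y v, u⟫ := by
  rw [(hasFDerivAt_grad_right_x g hg x y).fderiv, (hasFDerivAt_grad_left_y g hg x y).fderiv]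
  simp only [ContinuousLinearMap.comp_apply]
  rw [inner_rightRep, inner_leftRep]
  have hsym : IsSymmSndFDerivAt ℝ g (x, y) :=
    hg.contDiffAt.isSymmSndFDerivAt (by simp)
  simpa using hsym (u, 0) (0, v)

end Aux

/-- For `g` twice continuously differentiable with `∇²_{yy} g(x,y) ⪰ μ_g I`
and `‖∇²_{xy} g(x,y)‖ ≤ C_{xy}` (operator norm) everywhere, the inner solution map
`x ↦ y*(x)` is Lipschitz continuous with constant `C_{xy}/μ_g`. -/
theorem inner_solution_lipschitz
    {d₁ d₂ : ℕ}
    (g : EuclideanSpace ℝ (Fin d₁) × EuclideanSpace ℝ (Fin d₂) → ℝ)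
    (μg Cxy : ℝ) (hμg : 0 < μg) (hCxy : 0 < Cxy)
    (hg_smooth : ContDiff ℝ 2 g)
    -- the gradients of `g` in `y` and in `x`
    (gradYg : EuclideanSpace ℝ (Fin d₁) → EuclideanSpace ℝ (Fin d₂) → EuclideanSpace ℝ (Fin d₂))
    (hgradYg : ∀ x y, gradYg x y = gradient (fun y' => g (x, y')) y)
    (gradXg : EuclideanSpace ℝ (Fin d₁) → EuclideanSpace ℝ (Fin d₂) → EuclideanSpace ℝ (Fin d₁))
    (hgradXg : ∀ x y, gradXg x y = gradient (fun x' => g (x', y)) x)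
    (hg_hess : ∀ x y (v : EuclideanSpace ℝ (Fin d₂)),
      μg * ‖v‖ ^ 2 ≤ ⟪fderiv ℝ (gradYg x) y v, v⟫)
    -- `‖∇²_{xy} g(x,y)‖ ≤ C_{xy}` in operator norm
    (hg_mixed : ∀ x y, ‖fderiv ℝ (fun y' => gradXg x y') y‖ ≤ Cxy)
    -- `y*` is the (unique) minimizer of `y ↦ g (x, y)` for every `x`
    (ystar : EuclideanSpace ℝ (Fin d₁) → EuclideanSpace ℝ (Fin d₂))
    (hystar : ∀ x y, g (x, ystar x) ≤ g (x, y)) :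
    ∀ x₁ x₂, ‖ystar x₁ - ystar x₂‖ ≤ (Cxy / μg) * ‖x₁ - x₂‖ := by
  let E₁ := EuclideanSpace ℝ (Fin d₁)
  let E₂ := EuclideanSpace ℝ (Fin d₂)
  -- rewrite gradYg, gradXg as functions
  have hYfun : ∀ x, gradYg x = fun y => gradient (fun y' => g (x, y')) y :=
    fun x => funext fun y => hgradYg x y
  have hXfun : ∀ x, (fun y => gradXg x y) = fun y => gradient (fun x' => g (x', y)) x :=
    fun x => funext fun y => hgradXg x y
  -- first-order condition: ∇_y g (x, y*(x)) = 0
  have hfoc : ∀ x, gradYg x (ystar x) = 0 := by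
    intro x
    have hmin : IsLocalMin (fun y => g (x, y)) (ystar x) :=
      Filter.Eventually.of_forall (fun y => hystar x y)
    have := hmin.fderiv_eq_zero
    rw [hgradYg, gradient, this, map_zero]
  -- Lipschitz bound in x of the gradient in y
  have hLip : ∀ (y : E₂) (x₁ x₂ : E₁),
      ‖gradYg x₁ y - gradYg x₂ y‖ ≤ Cxy * ‖x₁ - x₂‖ := by
    intro y x₁ x₂
    set φ : E₁ → E₂ := fun x' => gradient (fun y' => g (x', y')) y with hφ
    have hder : ∀ x, HasFDerivAt φ
        ((rightRep).comp ((fderiv ℝ (fderiv ℝ g) (x, y)).comp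
          (ContinuousLinearMap.inl ℝ E₁ E₂))) x :=
      fun x => hasFDerivAt_grad_right_x g hg_smooth x y
    -- bound ‖fderiv φ x‖ ≤ Cxy via symmetry and hg_mixed
    have hbound : ∀ x, ‖fderiv ℝ φ x‖ ≤ Cxy := by
      intro x
      refine ContinuousLinearMap.opNorm_le_bound _ hCxy.le (fun u => ?_)
      set w := fderiv ℝ φ x u with hw
      have key : ⟪w, w⟫ = ⟪fderiv ℝ (fun y' => gradient (fun x' => g (x', y')) x) y w, u⟫ := by
        rw [hw, hφ]
        exact mixed_symm g hg_smooth x y u w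
      have h2 : (fun y' => gradient (fun x' => g (x', y')) x) = fun y' => gradXg x y' := by
        funext y'; rw [hgradXg]
      have hle : ⟪w, w⟫ ≤ Cxy * ‖w‖ * ‖u‖ := by
        rw [key, h2]
        calc ⟪fderiv ℝ (fun y' => gradXg x y') y w, u⟫
            ≤ ‖fderiv ℝ (fun y' => gradXg x y') y w‖ * ‖u‖ := real_inner_le_norm _ _
          _ ≤ (‖fderiv ℝ (fun y' => gradXg x y') y‖ * ‖w‖) * ‖u‖ := by
              gcongr; exact ContinuousLinearMap.le_opNorm _ _
          _ ≤ Cxy * ‖w‖ * ‖u‖ := by gcongr; exact hg_mixed x y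
      rw [real_inner_self_eq_norm_sq] at hle
      rcases eq_or_lt_of_le (norm_nonneg w) with h0 | h0
      · rw [← h0]; positivity
      · nlinarith [norm_nonneg u]
    have := Convex.norm_image_sub_le_of_norm_fderiv_le
      (fun x _ => (hder x).differentiableAt) (fun x _ => hbound x)
      (convex_univ) (Set.mem_univ x₂) (Set.mem_univ x₁)
    have hre : gradYg x₁ y - gradYg x₂ y = φ x₁ - φ x₂ := by
      rw [hgradYg, hgradYg, hφ]
    rw [hre]; exact this
  -- strong monotonicity of the gradient in y
  have hmono : ∀ (x : E₁) (y₁ y₂ : E₂),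
      μg * ‖y₁ - y₂‖ ^ 2 ≤ ⟪gradYg x y₁ - gradYg x y₂, y₁ - y₂⟫ := by
    intro x y₁ y₂
    set Δ := y₁ - y₂ with hΔ
    -- gradYg x is differentiable
    have hgx : ContDiff ℝ 2 (fun y' : E₂ => g (x, y')) :=
      hg_smooth.comp (contDiff_const.prodMk contDiff_id)
    have hdiffY : Differentiable ℝ (gradYg x) := by
      have heq : gradYg x = fun y => rightRep (fderiv ℝ g (x, y)) :=
        funext fun y => by rw [hgradYg, grad_right_eq g hg_smooth]
      rw [heq]
      exact (rightRep.differentiable).comp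
        (((hg_smooth.fderiv_right (m := 1) (by norm_num)).differentiable one_ne_zero).comp
          ((differentiable_const x).prodMk differentiable_id))
    set c : ℝ → E₂ := fun t => y₂ + t • Δ with hc
    have hcder : ∀ t : ℝ, HasDerivAt c Δ t := by
      intro t
      rw [hc]; exact (((hasDerivAt_id t).smul_const Δ).const_add y₂).congr_deriv (by simp)
    set q : ℝ → ℝ := fun t => ⟪Δ, gradYg x (c t)⟫ with hq
    have hqder : ∀ t : ℝ, HasDerivAt q
        ⟪Δ, fderiv ℝ (gradYg x) (c t) Δ⟫ t := by
      intro t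
      have h1 : HasDerivAt (fun t => gradYg x (c t)) (fderiv ℝ (gradYg x) (c t) Δ) t :=
        (hdiffY (c t)).hasFDerivAt.comp_hasDerivAt t (hcder t)
      have h2 := ((innerSL ℝ Δ).hasFDerivAt.comp_hasDerivAt t h1)
      simpa [hq, Function.comp_def] using h2
    set f : ℝ → ℝ := fun t => q t - t * (μg * ‖Δ‖ ^ 2) with hf
    have hfder : ∀ t : ℝ, HasDerivAt f (⟪Δ, fderiv ℝ (gradYg x) (c t) Δ⟫ - μg * ‖Δ‖ ^ 2) t := by
      intro t
      rw [hf]; exact ((hqder t).sub ((hasDerivAt_id t).mul_const (μg * ‖Δ‖ ^ 2))).congr_deriv (by simp)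
    have hmonof : Monotone f := by
      apply monotone_of_deriv_nonneg
      · exact fun t => (hfder t).differentiableAt
      · intro t
        rw [(hfder t).deriv]
        have := hg_hess x (c t) Δ
        rw [real_inner_comm]
        linarith
    have h01 := hmonof (by norm_num : (0:ℝ) ≤ 1)
    have hc0 : c 0 = y₂ := by simp [hc]
    have hc1 : c 1 = y₁ := by simp [hc, hΔ]
    have key : q 0 + μg * ‖Δ‖ ^ 2 ≤ q 1 := by
      simp only [hf] at h01
      linarith [h01]
    have q0 : q 0 = ⟪Δ, gradYg x y₂⟫ := by
      show ⟪Δ, gradYg x (c 0)⟫ = _; rw [hc0]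
    have q1 : q 1 = ⟪Δ, gradYg x y₁⟫ := by
      show ⟪Δ, gradYg x (c 1)⟫ = _; rw [hc1]
    rw [inner_sub_left]
    linarith [key, q0, q1, real_inner_comm Δ (gradYg x y₁), real_inner_comm Δ (gradYg x y₂)]
  -- assemble
  intro x₁ x₂
  set y₁ := ystar x₁
  set y₂ := ystar x₂
  set Δ := y₁ - y₂ with hΔ
  have h1 : μg * ‖Δ‖ ^ 2 ≤ ⟪gradYg x₁ y₁ - gradYg x₁ y₂, Δ⟫ := hmono x₁ y₁ y₂
  have h2 : gradYg x₁ y₁ = 0 := hfoc x₁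
  have h3 : gradYg x₂ y₂ = 0 := hfoc x₂
  have h4 : ⟪gradYg x₁ y₁ - gradYg x₁ y₂, Δ⟫ = ⟪gradYg x₂ y₂ - gradYg x₁ y₂, Δ⟫ := by
    rw [h2, h3]
  have h5 : ⟪gradYg x₂ y₂ - gradYg x₁ y₂, Δ⟫ ≤ Cxy * ‖x₂ - x₁‖ * ‖Δ‖ := by
    calc ⟪gradYg x₂ y₂ - gradYg x₁ y₂, Δ⟫
        ≤ ‖gradYg x₂ y₂ - gradYg x₁ y₂‖ * ‖Δ‖ := real_inner_le_norm _ _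
      _ ≤ (Cxy * ‖x₂ - x₁‖) * ‖Δ‖ := by gcongr; exact hLip y₂ x₂ x₁
  have h6 : μg * ‖Δ‖ ^ 2 ≤ Cxy * ‖x₁ - x₂‖ * ‖Δ‖ := by
    rw [norm_sub_rev x₁ x₂]
    calc μg * ‖Δ‖ ^ 2 ≤ ⟪gradYg x₁ y₁ - gradYg x₁ y₂, Δ⟫ := h1
      _ = _ := h4
      _ ≤ Cxy * ‖x₂ - x₁‖ * ‖Δ‖ := h5
  rcases eq_or_lt_of_le (norm_nonneg Δ) with h0 | h0
  · rw [hΔ] at h0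
    rw [← h0]
    positivity
  · rw [hΔ] at h6 h0 ⊢
    rw [div_mul_eq_mul_div, le_div_iff₀ hμg]
    nlinarith
end

section
/- Let f : ℝ^{d₁} × ℝ^{d₂} → ℝ and g : ℝ^{d₁} × ℝ^{d₂} → ℝ satisfy: ∇_x f(x,·) and ∇_y f(x,·) are Lipschitz in y with constant L_f, and ‖∇_y f(x,y)‖ ≤ C_f for all (x,y); g is twice continuously differentiable with ∇²_{yy} g(x,y) ⪰ μ_g I, ‖∇²_{xy} g(x,y)‖ ≤ C_g, and ∇²_{xy} g(x,·), ∇²_{yy} g(x,·) Lipschitz in y with constant L_g, for all (x,y). Then there exists a constant L > 0, depending only on L_f, C_f, μ_g, C_g, L_g, such that for all x ∈ ℝ^{d₁} and all y₁, y₂ ∈ ℝ^{d₂}, ‖\bar∇_x f(x,y₁) − \bar∇_x f(x,y₂)‖ ≤ L ‖y₁ − y₂‖. -/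
open scoped RealInnerProductSpace

/-- Under Lipschitz/boundedness assumptions on the gradients of `f` and on the
second derivatives of `g` (Assumptions 2 and 3 of the paper), the hypergradient
`∇̄ₓ f(x,y) = ∇ₓ f(x,y) − ∇²_{xy} g(x,y) [∇²_{yy} g(x,y)]⁻¹ ∇_y f(x,y)`
is Lipschitz continuous in the inner variable `y`, uniformly in `x`. -/
theorem hypergradient_lipschitz_in_y
    {d₁ d₂ : ℕ}
    (f g : EuclideanSpace ℝ (Fin d₁) × EuclideanSpace ℝ (Fin d₂) → ℝ)
    (Lf Cf μg Cg Lg : ℝ) (hLf : 0 < Lf) (hCf : 0 < Cf)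
    (hμg : 0 < μg) (hCg : 0 < Cg) (hLg : 0 < Lg)
    -- the gradients of `f` in `x`, `f` in `y`, `g` in `x` and `g` in `y`
    (gradXf : EuclideanSpace ℝ (Fin d₁) → EuclideanSpace ℝ (Fin d₂) → EuclideanSpace ℝ (Fin d₁))
    (hgradXf : ∀ x y, gradXf x y = gradient (fun x' => f (x', y)) x)
    (gradYf : EuclideanSpace ℝ (Fin d₁) → EuclideanSpace ℝ (Fin d₂) → EuclideanSpace ℝ (Fin d₂))
    (hgradYf : ∀ x y, gradYf x y = gradient (fun y' => f (x, y')) y)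
    (gradXg : EuclideanSpace ℝ (Fin d₁) → EuclideanSpace ℝ (Fin d₂) → EuclideanSpace ℝ (Fin d₁))
    (hgradXg : ∀ x y, gradXg x y = gradient (fun x' => g (x', y)) x)
    (gradYg : EuclideanSpace ℝ (Fin d₁) → EuclideanSpace ℝ (Fin d₂) → EuclideanSpace ℝ (Fin d₂))
    (hgradYg : ∀ x y, gradYg x y = gradient (fun y' => g (x, y')) y)
    -- Assumption 2: `∇ₓ f(x,·)` and `∇_y f(x,·)` are `L_f`-Lipschitz in `y`,
    -- and `‖∇_y f(x,y)‖ ≤ C_f`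
    (hf_lipx : ∀ x y₁ y₂, ‖gradXf x y₁ - gradXf x y₂‖ ≤ Lf * ‖y₁ - y₂‖)
    (hf_lipy : ∀ x y₁ y₂, ‖gradYf x y₁ - gradYf x y₂‖ ≤ Lf * ‖y₁ - y₂‖)
    (hf_bound : ∀ x y, ‖gradYf x y‖ ≤ Cf)
    -- Assumption 3: `g` is `C²`, `∇²_{yy} g ⪰ μ_g I`, `‖∇²_{xy} g‖ ≤ C_g`, and
    -- `∇²_{xy} g(x,·)`, `∇²_{yy} g(x,·)` are `L_g`-Lipschitz in `y`
    (hg_smooth : ContDiff ℝ 2 g)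
    (hg_hess : ∀ x y (v : EuclideanSpace ℝ (Fin d₂)),
      μg * ‖v‖ ^ 2 ≤ ⟪fderiv ℝ (gradYg x) y v, v⟫)
    (hg_mixed_bound : ∀ x y, ‖fderiv ℝ (fun y' => gradXg x y') y‖ ≤ Cg)
    (hg_mixed_lip : ∀ x y₁ y₂,
      ‖fderiv ℝ (fun y' => gradXg x y') y₁ - fderiv ℝ (fun y' => gradXg x y') y₂‖
        ≤ Lg * ‖y₁ - y₂‖)
    (hg_hess_lip : ∀ x y₁ y₂,
      ‖fderiv ℝ (gradYg x) y₁ - fderiv ℝ (gradYg x) y₂‖ ≤ Lg * ‖y₁ - y₂‖)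
    -- the hypergradient `∇̄ₓ f`
    (barf : EuclideanSpace ℝ (Fin d₁) → EuclideanSpace ℝ (Fin d₂) → EuclideanSpace ℝ (Fin d₁))
    (hbarf : ∀ x y, barf x y =
      gradXf x y -
        (fderiv ℝ (fun y' => gradXg x y') y)
          ((Ring.inverse (fderiv ℝ (gradYg x) y)) (gradYf x y))) :
    ∃ L > 0, ∀ x y₁ y₂, ‖barf x y₁ - barf x y₂‖ ≤ L * ‖y₁ - y₂‖ := by
  refine ⟨Lf + Lg * Cf / μg + Cg * Cf * Lg / (μg * μg) + Cg * Lf / μg, by positivity, ?_⟩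
  intro x y₁ y₂
  set H : EuclideanSpace ℝ (Fin d₂) → (EuclideanSpace ℝ (Fin d₂) →L[ℝ] EuclideanSpace ℝ (Fin d₂)) := fun y => fderiv ℝ (gradYg x) y with hHdef
  set M : EuclideanSpace ℝ (Fin d₂) → (EuclideanSpace ℝ (Fin d₂) →L[ℝ] EuclideanSpace ℝ (Fin d₁)) :=
    fun y => fderiv ℝ (fun y' => gradXg x y') y with hMdef
  -- coercivity gives a lower bound on ‖H y v‖
  have hlow : ∀ y (v : EuclideanSpace ℝ (Fin d₂)), μg * ‖v‖ ≤ ‖H y v‖ := by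
    intro y v
    rcases eq_or_ne v 0 with rfl | hv
    · simp
    · have h1 : μg * ‖v‖ ^ 2 ≤ ⟪H y v, v⟫ := hg_hess x y v
      have h2 : ⟪H y v, v⟫ ≤ ‖H y v‖ * ‖v‖ := real_inner_le_norm _ _
      have hvpos : (0:ℝ) < ‖v‖ := norm_pos_iff.mpr hv
      have h3 : μg * ‖v‖ * ‖v‖ ≤ ‖H y v‖ * ‖v‖ := by nlinarith
      exact le_of_mul_le_mul_right h3 hvpos
  -- `H y` is a unit
  have hunit : ∀ y, IsUnit (H y) := by
    intro y
    have hinj : Function.Injective (H y) := by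
      intro v w hvw
      have h0 : (H y) (v - w) = 0 := by rw [map_sub, hvw, sub_self]
      have h1 := hlow y (v - w)
      rw [h0, norm_zero] at h1
      have h2 : ‖v - w‖ = 0 := le_antisymm (by nlinarith [norm_nonneg (v - w)]) (norm_nonneg _)
      exact sub_eq_zero.mp (norm_eq_zero.mp h2)
    let e := LinearEquiv.ofInjectiveEndo ((H y : EuclideanSpace ℝ (Fin d₂) →ₗ[ℝ] EuclideanSpace ℝ (Fin d₂))) hinj
    exact ⟨e.toContinuousLinearEquiv.toUnit, by ext v; rfl⟩
  set I : EuclideanSpace ℝ (Fin d₂) → (EuclideanSpace ℝ (Fin d₂) →L[ℝ] EuclideanSpace ℝ (Fin d₂)) := fun y => Ring.inverse (H y) with hIdef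
  have hHI : ∀ y, H y * I y = 1 := fun y => Ring.mul_inverse_cancel _ (hunit y)
  have hIH : ∀ y, I y * H y = 1 := fun y => Ring.inverse_mul_cancel _ (hunit y)
  have hHIapp : ∀ y w, H y (I y w) = w := by
    intro y w
    have := ContinuousLinearMap.ext_iff.mp (hHI y) w
    simpa [ContinuousLinearMap.mul_apply] using this
  -- norm bound on the inverse
  have hInorm : ∀ y, ‖I y‖ ≤ 1 / μg := by
    intro y
    refine ContinuousLinearMap.opNorm_le_bound _ (by positivity) fun w => ?_
    have h1 := hlow y (I y w)
    rw [hHIapp y w] at h1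
    rw [div_mul_eq_mul_div, le_div_iff₀ hμg, mul_comm ‖I y w‖ μg]
    linarith
  -- Lipschitz bound on the inverse
  have hIlip : ‖I y₁ - I y₂‖ ≤ 1 / μg * (Lg * ‖y₁ - y₂‖) * (1 / μg) := by
    have key : I y₁ - I y₂ = I y₁ * (H y₂ - H y₁) * I y₂ := by
      have : I y₁ * (H y₂ - H y₁) * I y₂
          = I y₁ * (H y₂ * I y₂) - I y₁ * H y₁ * I y₂ := by
        rw [mul_sub, sub_mul, mul_assoc]
      rw [this, hHI y₂, hIH y₁, mul_one, one_mul]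
    rw [key]
    have h1 : ‖I y₁ * (H y₂ - H y₁) * I y₂‖ ≤ ‖I y₁ * (H y₂ - H y₁)‖ * ‖I y₂‖ :=
      norm_mul_le _ _
    have h2 : ‖I y₁ * (H y₂ - H y₁)‖ ≤ ‖I y₁‖ * ‖H y₂ - H y₁‖ := norm_mul_le _ _
    have h3 : ‖H y₂ - H y₁‖ ≤ Lg * ‖y₁ - y₂‖ := by
      rw [show (‖y₁ - y₂‖ : ℝ) = ‖y₂ - y₁‖ from (norm_sub_rev _ _)]
      exact hg_hess_lip x y₂ y₁
    have hI1 := hInorm y₁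
    have hI2 := hInorm y₂
    have hμ : (0:ℝ) ≤ 1 / μg := by positivity
    calc ‖I y₁ * (H y₂ - H y₁) * I y₂‖
        ≤ ‖I y₁‖ * ‖H y₂ - H y₁‖ * ‖I y₂‖ := le_trans h1
          (mul_le_mul_of_nonneg_right h2 (norm_nonneg _))
      _ ≤ 1 / μg * (Lg * ‖y₁ - y₂‖) * (1 / μg) := by
          have := mul_le_mul (mul_le_mul hI1 h3 (norm_nonneg _) hμ) hI2 (norm_nonneg _)
            (by positivity)
          exact this
  -- assemble the final bound
  set v₁ := gradYf x y₁
  set v₂ := gradYf x y₂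
  have hsplit : barf x y₁ - barf x y₂
      = (gradXf x y₁ - gradXf x y₂)
        - ((M y₁ - M y₂) (I y₁ v₁) + (M y₂) ((I y₁ - I y₂) v₁)
            + (M y₂) (I y₂ (v₁ - v₂))) := by
    rw [hbarf x y₁, hbarf x y₂]
    simp only [ContinuousLinearMap.sub_apply, map_sub]
    abel
  have hv₁ : ‖I y₁ v₁‖ ≤ 1 / μg * Cf := by
    calc ‖I y₁ v₁‖ ≤ ‖I y₁‖ * ‖v₁‖ := (I y₁).le_opNorm v₁
      _ ≤ 1 / μg * Cf := mul_le_mul (hInorm y₁) (hf_bound x y₁) (norm_nonneg _)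
          (by positivity)
  have hT1 : ‖(M y₁ - M y₂) (I y₁ v₁)‖ ≤ Lg * ‖y₁ - y₂‖ * (1 / μg * Cf) := by
    calc ‖(M y₁ - M y₂) (I y₁ v₁)‖ ≤ ‖M y₁ - M y₂‖ * ‖I y₁ v₁‖ :=
          (M y₁ - M y₂).le_opNorm _
      _ ≤ Lg * ‖y₁ - y₂‖ * (1 / μg * Cf) :=
          mul_le_mul (hg_mixed_lip x y₁ y₂) hv₁ (norm_nonneg _) (by positivity)
  have hT2 : ‖(M y₂) ((I y₁ - I y₂) v₁)‖
      ≤ Cg * (1 / μg * (Lg * ‖y₁ - y₂‖) * (1 / μg) * Cf) := by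
    have h1 : ‖(I y₁ - I y₂) v₁‖ ≤ 1 / μg * (Lg * ‖y₁ - y₂‖) * (1 / μg) * Cf := by
      calc ‖(I y₁ - I y₂) v₁‖ ≤ ‖I y₁ - I y₂‖ * ‖v₁‖ := (I y₁ - I y₂).le_opNorm _
        _ ≤ 1 / μg * (Lg * ‖y₁ - y₂‖) * (1 / μg) * Cf :=
            mul_le_mul hIlip (hf_bound x y₁) (norm_nonneg _) (by positivity)
    calc ‖(M y₂) ((I y₁ - I y₂) v₁)‖ ≤ ‖M y₂‖ * ‖(I y₁ - I y₂) v₁‖ :=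
          (M y₂).le_opNorm _
      _ ≤ Cg * (1 / μg * (Lg * ‖y₁ - y₂‖) * (1 / μg) * Cf) :=
          mul_le_mul (hg_mixed_bound x y₂) h1 (norm_nonneg _) hCg.le
  have hT3 : ‖(M y₂) (I y₂ (v₁ - v₂))‖ ≤ Cg * (1 / μg * (Lf * ‖y₁ - y₂‖)) := by
    have h1 : ‖I y₂ (v₁ - v₂)‖ ≤ 1 / μg * (Lf * ‖y₁ - y₂‖) := by
      calc ‖I y₂ (v₁ - v₂)‖ ≤ ‖I y₂‖ * ‖v₁ - v₂‖ := (I y₂).le_opNorm _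
        _ ≤ 1 / μg * (Lf * ‖y₁ - y₂‖) :=
            mul_le_mul (hInorm y₂) (hf_lipy x y₁ y₂) (norm_nonneg _) (by positivity)
    calc ‖(M y₂) (I y₂ (v₁ - v₂))‖ ≤ ‖M y₂‖ * ‖I y₂ (v₁ - v₂)‖ := (M y₂).le_opNorm _
      _ ≤ Cg * (1 / μg * (Lf * ‖y₁ - y₂‖)) :=
          mul_le_mul (hg_mixed_bound x y₂) h1 (norm_nonneg _) hCg.le
  calc ‖barf x y₁ - barf x y₂‖
      ≤ ‖gradXf x y₁ - gradXf x y₂‖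
        + ‖(M y₁ - M y₂) (I y₁ v₁) + (M y₂) ((I y₁ - I y₂) v₁)
            + (M y₂) (I y₂ (v₁ - v₂))‖ := by rw [hsplit]; exact norm_sub_le _ _
    _ ≤ ‖gradXf x y₁ - gradXf x y₂‖
        + (‖(M y₁ - M y₂) (I y₁ v₁)‖ + ‖(M y₂) ((I y₁ - I y₂) v₁)‖
            + ‖(M y₂) (I y₂ (v₁ - v₂))‖) := by
          gcongr
          exact le_trans (norm_add_le _ _)
            (add_le_add (norm_add_le _ _) le_rfl)
    _ ≤ Lf * ‖y₁ - y₂‖ + (Lg * ‖y₁ - y₂‖ * (1 / μg * Cf)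
        + Cg * (1 / μg * (Lg * ‖y₁ - y₂‖) * (1 / μg) * Cf)
        + Cg * (1 / μg * (Lf * ‖y₁ - y₂‖))) := by
          exact add_le_add (hf_lipx x y₁ y₂) (add_le_add (add_le_add hT1 hT2) hT3)
    _ = (Lf + Lg * Cf / μg + Cg * Cf * Lg / (μg * μg) + Cg * Lf / μg) * ‖y₁ - y₂‖ := by
          ring
end

section
/- Let f : ℝ^{d₁} × ℝ^{d₂} → ℝ be twice continuously differentiable and let g : ℝ^{d₁} × ℝ^{d₂} → ℝ be three times continuously differentiable with ∇²_{yy} g(x,y) ⪰ μ_g I for all (x,y), where μ_g > 0. Let y*(x) be the unique minimizer of y ↦ g(x,y) and Φ(x) = f(x, y*(x)). Then Φ is twice differentiable and ∇²Φ(x) = ∇_x[\bar∇_x f](x, y*(x)) + ∇_y[\bar∇_x f](x, y*(x)) · D y*(x), where D y*(x) = −[∇²_{yy} g(x, y*(x))]^{-1} ∇²_{yx} g(x, y*(x)). -/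
open scoped RealInnerProductSpace

section Aux

open InnerProductSpace ContinuousLinearMap

noncomputable section

variable {E F : Type*} [NormedAddCommGroup E] [NormedSpace ℝ E]
  [NormedAddCommGroup F] [InnerProductSpace ℝ F]

/-- Real-linear version of `(toDual ℝ F).symm`. -/
def fromDualL [CompleteSpace F] : (F →L[ℝ] ℝ) ≃L[ℝ] F where
  toFun := (toDual ℝ F).symm
  invFun := toDual ℝ F
  map_add' x y := map_add _ x y
  map_smul' c L := by simp
  left_inv L := (toDual ℝ F).apply_symm_apply L
  right_inv v := (toDual ℝ F).symm_apply_apply v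
  continuous_toFun := (toDual ℝ F).symm.continuous
  continuous_invFun := (toDual ℝ F).continuous

lemma gradient_eq_fromDualL [CompleteSpace F] (f : F → ℝ) (y : F) :
    gradient f y = fromDualL (fderiv ℝ f y) := rfl

lemma inner_fromDualL [CompleteSpace F] (L : F →L[ℝ] ℝ) (u : F) :
    ⟪fromDualL L, u⟫ = L u :=
  toDual_symm_apply

lemma hasFDerivAt_slice_right {E' F' G : Type*} [NormedAddCommGroup E'] [NormedSpace ℝ E']
    [NormedAddCommGroup F'] [NormedSpace ℝ F'] [NormedAddCommGroup G] [NormedSpace ℝ G]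
    {h : E' × F' → G} {x : E'} {y : F'} (hd : DifferentiableAt ℝ h (x, y)) :
    HasFDerivAt (fun y' => h (x, y')) ((fderiv ℝ h (x, y)).comp (inr ℝ E' F')) y :=
  hd.hasFDerivAt.comp y (hasFDerivAt_prodMk_right x y)

lemma hasFDerivAt_slice_left {E' F' G : Type*} [NormedAddCommGroup E'] [NormedSpace ℝ E']
    [NormedAddCommGroup F'] [NormedSpace ℝ F'] [NormedAddCommGroup G] [NormedSpace ℝ G]
    {h : E' × F' → G} {x : E'} {y : F'} (hd : DifferentiableAt ℝ h (x, y)) :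
    HasFDerivAt (fun x' => h (x', y)) ((fderiv ℝ h (x, y)).comp (inl ℝ E' F')) x :=
  hd.hasFDerivAt.comp x (hasFDerivAt_prodMk_left x y)

lemma gradient_slice_right [CompleteSpace F] {h : E × F → ℝ} {x : E} {y : F}
    (hd : DifferentiableAt ℝ h (x, y)) :
    gradient (fun y' => h (x, y')) y = fromDualL ((fderiv ℝ h (x, y)).comp (inr ℝ E F)) := by
  rw [gradient_eq_fromDualL, (hasFDerivAt_slice_right hd).fderiv]

lemma gradient_slice_left {E' : Type*} [NormedAddCommGroup E'] [InnerProductSpace ℝ E']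
    [CompleteSpace E'] {G : Type*} [NormedAddCommGroup G] [NormedSpace ℝ G]
    {h : E' × G → ℝ} {x : E'} {y : G}
    (hd : DifferentiableAt ℝ h (x, y)) :
    gradient (fun x' => h (x', y)) x = fromDualL ((fderiv ℝ h (x, y)).comp (inl ℝ E' G)) := by
  rw [gradient_eq_fromDualL, (hasFDerivAt_slice_left hd).fderiv]

lemma strong_mono {G : F → F} {μ : ℝ} (hG : Differentiable ℝ G)
    (hpos : ∀ y v, μ * ‖v‖ ^ 2 ≤ ⟪fderiv ℝ G y v, v⟫) (y₁ y₂ : F) :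
    μ * ‖y₁ - y₂‖ ^ 2 ≤ ⟪G y₁ - G y₂, y₁ - y₂⟫ := by
  set v := y₁ - y₂ with hv
  rcases eq_or_ne y₁ y₂ with h | h
  · simp [h, hv]
  set φ : ℝ → ℝ := fun t => ⟪G (y₂ + t • v), v⟫ with hφ
  have hder : ∀ t : ℝ, HasDerivAt φ ⟪fderiv ℝ G (y₂ + t • v) v, v⟫ t := by
    intro t
    have hc : HasDerivAt (fun t : ℝ => y₂ + t • v) v t := by
      simpa using ((hasDerivAt_id t).smul_const v).const_add y₂
    have hGc : HasDerivAt (fun t : ℝ => G (y₂ + t • v))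
        (fderiv ℝ G (y₂ + t • v) v) t :=
      (hG _).hasFDerivAt.comp_hasDerivAt t hc
    simpa using hGc.inner ℝ (hasDerivAt_const t v)
  obtain ⟨c, -, hc⟩ := exists_hasDerivAt_eq_slope φ
      (fun t => ⟪fderiv ℝ G (y₂ + t • v) v, v⟫) (by norm_num : (0:ℝ) < 1)
      (fun t _ => (hder t).continuousAt.continuousWithinAt)
      (fun t _ => hder t)
  have h0 : φ 0 = ⟪G y₂, v⟫ := by simp [hφ]
  have h1 : φ 1 = ⟪G y₁, v⟫ := by simp [hφ, hv]
  have := hpos (y₂ + c • v) v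
  rw [hc, h0, h1] at this
  calc μ * ‖v‖ ^ 2 ≤ (⟪G y₁, v⟫ - ⟪G y₂, v⟫) / (1 - 0) := this
    _ = ⟪G y₁ - G y₂, v⟫ := by rw [inner_sub_left]; ring

variable [FiniteDimensional ℝ F]

lemma pos_def_bij {A : F →L[ℝ] F} {μ : ℝ} (hμ : 0 < μ)
    (h : ∀ v, μ * ‖v‖ ^ 2 ≤ ⟪A v, v⟫) : Function.Bijective A := by
  have hinj : Function.Injective (A : F →ₗ[ℝ] F) := by
    rw [← LinearMap.ker_eq_bot, LinearMap.ker_eq_bot']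
    intro v hv
    by_contra hv0
    have h1 := h v
    have hA : A v = 0 := hv
    rw [hA] at h1
    simp only [inner_zero_left] at h1
    nlinarith [mul_pos hμ (pow_pos (norm_pos_iff.mpr hv0) 2)]
  exact ⟨hinj, (LinearMap.injective_iff_surjective).mp hinj⟩

/-- A positive-definite continuous linear endomorphism as a continuous linear equiv. -/
def posDefEquiv {A : F →L[ℝ] F} {μ : ℝ} (hμ : 0 < μ)
    (h : ∀ v, μ * ‖v‖ ^ 2 ≤ ⟪A v, v⟫) : F ≃L[ℝ] F :=
  (LinearEquiv.ofBijective (A : F →ₗ[ℝ] F) (pos_def_bij hμ h)).toContinuousLinearEquiv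

lemma posDefEquiv_coe {A : F →L[ℝ] F} {μ : ℝ} (hμ : 0 < μ)
    (h : ∀ v, μ * ‖v‖ ^ 2 ≤ ⟪A v, v⟫) : (posDefEquiv hμ h : F →L[ℝ] F) = A := by
  ext v; rfl

lemma ringInverse_of_clequiv {G : Type*} [NormedAddCommGroup G] [NormedSpace ℝ G]
    (e : G ≃L[ℝ] G) : Ring.inverse (e : G →L[ℝ] G) = (e.symm : G →L[ℝ] G) :=
  Ring.inverse_unit e.toUnit

end

end Aux

set_option maxHeartbeats 1000000 in
/-- For `f` twice and `g` three times continuously differentiable with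
`∇²_{yy} g(x,y) ⪰ μ_g I` everywhere (`μ_g > 0`), the outer objective `Φ(x) = f(x, y*(x))`
is twice differentiable, with Hessian (Jacobian of the gradient)
`∇²Φ(x) = ∇ₓ[∇̄ₓ f](x, y*(x)) + ∇_y[∇̄ₓ f](x, y*(x)) ∘ D y*(x)`,
where `D y*(x) = −[∇²_{yy} g(x, y*(x))]⁻¹ ∇²_{yx} g(x, y*(x))`. -/
theorem outer_objective_hessian
    {d₁ d₂ : ℕ}
    (f g : EuclideanSpace ℝ (Fin d₁) × EuclideanSpace ℝ (Fin d₂) → ℝ)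
    (μg : ℝ) (hμg : 0 < μg)
    (hf_smooth : ContDiff ℝ 2 f)
    (hg_smooth : ContDiff ℝ 3 g)
    -- the gradients of `f` in `x`, `f` in `y`, `g` in `x` and `g` in `y`
    (gradXf : EuclideanSpace ℝ (Fin d₁) → EuclideanSpace ℝ (Fin d₂) → EuclideanSpace ℝ (Fin d₁))
    (hgradXf : ∀ x y, gradXf x y = gradient (fun x' => f (x', y)) x)
    (gradYf : EuclideanSpace ℝ (Fin d₁) → EuclideanSpace ℝ (Fin d₂) → EuclideanSpace ℝ (Fin d₂))
    (hgradYf : ∀ x y, gradYf x y = gradient (fun y' => f (x, y')) y)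
    (gradXg : EuclideanSpace ℝ (Fin d₁) → EuclideanSpace ℝ (Fin d₂) → EuclideanSpace ℝ (Fin d₁))
    (hgradXg : ∀ x y, gradXg x y = gradient (fun x' => g (x', y)) x)
    (gradYg : EuclideanSpace ℝ (Fin d₁) → EuclideanSpace ℝ (Fin d₂) → EuclideanSpace ℝ (Fin d₂))
    (hgradYg : ∀ x y, gradYg x y = gradient (fun y' => g (x, y')) y)
    (hg_hess : ∀ x y (v : EuclideanSpace ℝ (Fin d₂)),
      μg * ‖v‖ ^ 2 ≤ ⟪fderiv ℝ (gradYg x) y v, v⟫)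
    -- `y*` is the (unique) minimizer of `y ↦ g (x, y)` for every `x`
    (ystar : EuclideanSpace ℝ (Fin d₁) → EuclideanSpace ℝ (Fin d₂))
    (hystar : ∀ x y, g (x, ystar x) ≤ g (x, y))
    -- the hypergradient `∇̄ₓ f`
    (barf : EuclideanSpace ℝ (Fin d₁) → EuclideanSpace ℝ (Fin d₂) → EuclideanSpace ℝ (Fin d₁))
    (hbarf : ∀ x y, barf x y =
      gradXf x y -
        (fderiv ℝ (fun y' => gradXg x y') y)
          ((Ring.inverse (fderiv ℝ (gradYg x) y)) (gradYf x y)))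
    -- the Jacobian `D y*(x) = −[∇²_{yy} g(x, y*(x))]⁻¹ ∇²_{yx} g(x, y*(x))`
    (Dystar : ∀ x : EuclideanSpace ℝ (Fin d₁),
      EuclideanSpace ℝ (Fin d₁) →L[ℝ] EuclideanSpace ℝ (Fin d₂))
    (hDystar : ∀ x, Dystar x =
      -(ContinuousLinearMap.comp
          (Ring.inverse (fderiv ℝ (gradYg x) (ystar x)))
          (fderiv ℝ (fun x' => gradYg x' (ystar x)) x)))
    -- the outer objective
    (Φ : EuclideanSpace ℝ (Fin d₁) → ℝ)
    (hΦ : ∀ x, Φ x = f (x, ystar x)) :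
    Differentiable ℝ Φ ∧
    Differentiable ℝ (fun x => gradient Φ x) ∧
    ∀ x, fderiv ℝ (fun x' => gradient Φ x') x =
      fderiv ℝ (fun x' => barf x' (ystar x)) x +
        (fderiv ℝ (fun y' => barf x y') (ystar x)).comp (Dystar x) := by
  classical
  open ContinuousLinearMap in
  -- differentiability bookkeeping
  have hg2 : ContDiff ℝ 2 g := hg_smooth.of_le (by norm_num)
  have hgd : Differentiable ℝ g := hg2.differentiable (by norm_num)
  have hfd : Differentiable ℝ f := hf_smooth.differentiable (by norm_num)
  -- joint versions of the four partial gradients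
  set GYg : (EuclideanSpace ℝ (Fin d₁)) × (EuclideanSpace ℝ (Fin d₂)) → (EuclideanSpace ℝ (Fin d₂)) :=
    fun p => fromDualL ((fderiv ℝ g p).comp (inr ℝ (EuclideanSpace ℝ (Fin d₁)) (EuclideanSpace ℝ (Fin d₂)))) with hGYgdef
  set GXg : (EuclideanSpace ℝ (Fin d₁)) × (EuclideanSpace ℝ (Fin d₂)) → (EuclideanSpace ℝ (Fin d₁)) :=
    fun p => fromDualL ((fderiv ℝ g p).comp (inl ℝ (EuclideanSpace ℝ (Fin d₁)) (EuclideanSpace ℝ (Fin d₂)))) with hGXgdef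
  set GXf : (EuclideanSpace ℝ (Fin d₁)) × (EuclideanSpace ℝ (Fin d₂)) → (EuclideanSpace ℝ (Fin d₁)) :=
    fun p => fromDualL ((fderiv ℝ f p).comp (inl ℝ (EuclideanSpace ℝ (Fin d₁)) (EuclideanSpace ℝ (Fin d₂)))) with hGXfdef
  set GYf : (EuclideanSpace ℝ (Fin d₁)) × (EuclideanSpace ℝ (Fin d₂)) → (EuclideanSpace ℝ (Fin d₂)) :=
    fun p => fromDualL ((fderiv ℝ f p).comp (inr ℝ (EuclideanSpace ℝ (Fin d₁)) (EuclideanSpace ℝ (Fin d₂)))) with hGYfdef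
  have hGYg_smooth : ContDiff ℝ 2 GYg :=
    fromDualL.contDiff.comp
      ((((compL ℝ (EuclideanSpace ℝ (Fin d₂)) ((EuclideanSpace ℝ (Fin d₁)) × (EuclideanSpace ℝ (Fin d₂))) ℝ).flip (inr ℝ (EuclideanSpace ℝ (Fin d₁)) (EuclideanSpace ℝ (Fin d₂)))).contDiff).comp
        (hg_smooth.fderiv_right (by norm_num)))
  have hGXg_smooth : ContDiff ℝ 2 GXg :=
    fromDualL.contDiff.comp
      ((((compL ℝ (EuclideanSpace ℝ (Fin d₁)) ((EuclideanSpace ℝ (Fin d₁)) × (EuclideanSpace ℝ (Fin d₂))) ℝ).flip (inl ℝ (EuclideanSpace ℝ (Fin d₁)) (EuclideanSpace ℝ (Fin d₂)))).contDiff).comp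
        (hg_smooth.fderiv_right (by norm_num)))
  have hGXf_smooth : ContDiff ℝ 1 GXf :=
    fromDualL.contDiff.comp
      ((((compL ℝ (EuclideanSpace ℝ (Fin d₁)) ((EuclideanSpace ℝ (Fin d₁)) × (EuclideanSpace ℝ (Fin d₂))) ℝ).flip (inl ℝ (EuclideanSpace ℝ (Fin d₁)) (EuclideanSpace ℝ (Fin d₂)))).contDiff).comp
        (hf_smooth.fderiv_right (by norm_num)))
  have hGYf_smooth : ContDiff ℝ 1 GYf :=
    fromDualL.contDiff.comp
      ((((compL ℝ (EuclideanSpace ℝ (Fin d₂)) ((EuclideanSpace ℝ (Fin d₁)) × (EuclideanSpace ℝ (Fin d₂))) ℝ).flip (inr ℝ (EuclideanSpace ℝ (Fin d₁)) (EuclideanSpace ℝ (Fin d₂)))).contDiff).comp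
        (hf_smooth.fderiv_right (by norm_num)))
  -- identifications of partial gradients with slices of the joint maps
  have hGYg_eq : ∀ x y, gradYg x y = GYg (x, y) := fun x y => by
    rw [hgradYg, gradient_slice_right (hgd (x, y))]
  have hGXg_eq : ∀ x y, gradXg x y = GXg (x, y) := fun x y => by
    rw [hgradXg, gradient_slice_left (hgd (x, y))]
  have hGXf_eq : ∀ x y, gradXf x y = GXf (x, y) := fun x y => by
    rw [hgradXf, gradient_slice_left (hfd (x, y))]
  have hGYf_eq : ∀ x y, gradYf x y = GYf (x, y) := fun x y => by
    rw [hgradYf, gradient_slice_right (hfd (x, y))]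
  -- the second-order blocks
  set A : (EuclideanSpace ℝ (Fin d₁)) × (EuclideanSpace ℝ (Fin d₂)) → (EuclideanSpace ℝ (Fin d₂)) →L[ℝ] (EuclideanSpace ℝ (Fin d₂)) :=
    fun p => (fderiv ℝ GYg p).comp (inr ℝ (EuclideanSpace ℝ (Fin d₁)) (EuclideanSpace ℝ (Fin d₂))) with hAdef
  set B : (EuclideanSpace ℝ (Fin d₁)) × (EuclideanSpace ℝ (Fin d₂)) → (EuclideanSpace ℝ (Fin d₁)) →L[ℝ] (EuclideanSpace ℝ (Fin d₂)) :=
    fun p => (fderiv ℝ GYg p).comp (inl ℝ (EuclideanSpace ℝ (Fin d₁)) (EuclideanSpace ℝ (Fin d₂))) with hBdef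
  set C : (EuclideanSpace ℝ (Fin d₁)) × (EuclideanSpace ℝ (Fin d₂)) → (EuclideanSpace ℝ (Fin d₂)) →L[ℝ] (EuclideanSpace ℝ (Fin d₁)) :=
    fun p => (fderiv ℝ GXg p).comp (inr ℝ (EuclideanSpace ℝ (Fin d₁)) (EuclideanSpace ℝ (Fin d₂))) with hCdef
  have hGYg_diff : Differentiable ℝ GYg := hGYg_smooth.differentiable (by norm_num)
  have hGXg_diff : Differentiable ℝ GXg := hGXg_smooth.differentiable (by norm_num)
  have hA_eq : ∀ x y, fderiv ℝ (gradYg x) y = A (x, y) := fun x y => by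
    have h1 : gradYg x = fun y' => GYg (x, y') := funext fun y' => hGYg_eq x y'
    rw [h1, (hasFDerivAt_slice_right (hGYg_diff (x, y))).fderiv]
  have hB_eq : ∀ x y, fderiv ℝ (fun x' => gradYg x' y) x = B (x, y) := fun x y => by
    have h1 : (fun x' => gradYg x' y) = fun x' => GYg (x', y) :=
      funext fun x' => hGYg_eq x' y
    rw [h1, (hasFDerivAt_slice_left (hGYg_diff (x, y))).fderiv]
  have hC_eq : ∀ x y, fderiv ℝ (fun y' => gradXg x y') y = C (x, y) := fun x y => by
    have h1 : (fun y' => gradXg x y') = fun y' => GXg (x, y') :=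
      funext fun y' => hGXg_eq x y'
    rw [h1, (hasFDerivAt_slice_right (hGXg_diff (x, y))).fderiv]
  -- positivity of the `yy`-block
  have hApos : ∀ p : (EuclideanSpace ℝ (Fin d₁)) × (EuclideanSpace ℝ (Fin d₂)), ∀ v, μg * ‖v‖ ^ 2 ≤ ⟪A p v, v⟫ := fun p v => by
    have := hg_hess p.1 p.2 v
    rwa [hA_eq p.1 p.2] at this
  -- first-order condition
  have hfoc : ∀ x, GYg (x, ystar x) = 0 := by
    intro x
    have hmin : IsLocalMin (fun y => g (x, y)) (ystar x) :=
      Filter.Eventually.of_forall fun y => hystar x y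
    have h0 : fderiv ℝ (fun y' => g (x, y')) (ystar x) = 0 := hmin.fderiv_eq_zero
    have h1 : GYg (x, ystar x) = gradient (fun y' => g (x, y')) (ystar x) :=
      (gradient_slice_right (hgd (x, ystar x))).symm
    rw [h1, gradient_eq_fromDualL, h0, map_zero]
  -- strong monotonicity of `y ↦ gradYg x y`
  have hmono : ∀ x y₁ y₂, μg * ‖y₁ - y₂‖ ^ 2 ≤ ⟪gradYg x y₁ - gradYg x y₂, y₁ - y₂⟫ := by
    intro x
    refine strong_mono ?_ (hg_hess x)
    have h1 : gradYg x = fun y' => GYg (x, y') := funext fun y' => hGYg_eq x y'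
    rw [h1]
    exact hGYg_diff.comp ((differentiable_const x).prodMk differentiable_id)
  -- continuity of `ystar`
  have hyscont : Continuous ystar := by
    rw [continuous_iff_continuousAt]
    intro x₀
    have hbound : ∀ x, μg * ‖ystar x - ystar x₀‖ ≤ ‖GYg (x, ystar x₀)‖ := by
      intro x
      rcases eq_or_ne (ystar x) (ystar x₀) with h | h
      · simp [h]
      have h1 := hmono x (ystar x) (ystar x₀)
      rw [hGYg_eq, hGYg_eq, hfoc x, zero_sub] at h1
      have h2 : ⟪-GYg (x, ystar x₀), ystar x - ystar x₀⟫ ≤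
          ‖GYg (x, ystar x₀)‖ * ‖ystar x - ystar x₀‖ := by
        calc ⟪-GYg (x, ystar x₀), ystar x - ystar x₀⟫
            ≤ ‖-GYg (x, ystar x₀)‖ * ‖ystar x - ystar x₀‖ := real_inner_le_norm _ _
          _ = ‖GYg (x, ystar x₀)‖ * ‖ystar x - ystar x₀‖ := by rw [norm_neg]
      have hpos : (0:ℝ) < ‖ystar x - ystar x₀‖ :=
        norm_pos_iff.mpr (sub_ne_zero.mpr h)
      nlinarith [sq_nonneg ‖ystar x - ystar x₀‖]
    have hGcont : Filter.Tendsto (fun x => ‖GYg (x, ystar x₀)‖) (nhds x₀) (nhds 0) := by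
      have : Continuous fun x => ‖GYg (x, ystar x₀)‖ :=
        (hGYg_smooth.continuous.comp (continuous_id.prodMk continuous_const)).norm
      have h2 := this.continuousAt (x := x₀)
      rwa [ContinuousAt, hfoc x₀, norm_zero] at h2
    have hnorm : Filter.Tendsto (fun x => ‖ystar x - ystar x₀‖) (nhds x₀) (nhds 0) := by
      refine squeeze_zero (g := fun x => ‖GYg (x, ystar x₀)‖ / μg) (fun x => norm_nonneg _) (fun x => ?_) ?_
      · exact (le_div_iff₀' hμg).mpr (hbound x)
      · simpa using hGcont.div_const μg
    rw [ContinuousAt]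
    exact tendsto_iff_norm_sub_tendsto_zero.mpr hnorm
  -- `ystar` is differentiable with derivative `Dystar` (inverse function theorem)
  have hys_deriv : ∀ x₀, HasFDerivAt ystar (Dystar x₀) x₀ := by
    intro x₀
    have hApos₀ := hApos (x₀, ystar x₀)
    set Aeq : (EuclideanSpace ℝ (Fin d₂)) ≃L[ℝ] (EuclideanSpace ℝ (Fin d₂)) :=
      posDefEquiv hμg hApos₀ with hAeqdef
    have hAeq_coe : (Aeq : (EuclideanSpace ℝ (Fin d₂)) →L[ℝ] (EuclideanSpace ℝ (Fin d₂)))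
        = A (x₀, ystar x₀) := posDefEquiv_coe hμg hApos₀
    set Ψ : (EuclideanSpace ℝ (Fin d₁)) × (EuclideanSpace ℝ (Fin d₂)) →
        (EuclideanSpace ℝ (Fin d₁)) × (EuclideanSpace ℝ (Fin d₂)) :=
      fun p => (p.1, GYg p) with hΨdef
    have hΨc : ContDiff ℝ 2 Ψ := contDiff_fst.prodMk hGYg_smooth
    set DG := fderiv ℝ GYg (x₀, ystar x₀) with hDGdef
    set L : (EuclideanSpace ℝ (Fin d₁)) × (EuclideanSpace ℝ (Fin d₂)) →L[ℝ]
        (EuclideanSpace ℝ (Fin d₁)) × (EuclideanSpace ℝ (Fin d₂)) :=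
      (fst ℝ (EuclideanSpace ℝ (Fin d₁)) (EuclideanSpace ℝ (Fin d₂))).prod DG with hLdef
    have hDΨ : HasFDerivAt Ψ L (x₀, ystar x₀) :=
      (hasFDerivAt_fst).prodMk (hGYg_diff (x₀, ystar x₀)).hasFDerivAt
    -- a small linear algebra fact: `L` is bijective
    have hker : ∀ z, L z = 0 → z = 0 := by
      intro z hz
      have hz1 : z.1 = 0 ∧ DG z = 0 := by
        have := Prod.ext_iff.mp hz
        simpa [hLdef] using this
      have hz2 : A (x₀, ystar x₀) z.2 = 0 := by
        have hzz : z = (0, z.2) := Prod.ext hz1.1 rfl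
        have : A (x₀, ystar x₀) z.2 = DG z := by
          rw [hAdef]
          simp only [ContinuousLinearMap.coe_comp', Function.comp_apply, inr_apply]
          rw [hzz]
        rw [this, hz1.2]
      have hz3 : μg * ‖z.2‖ ^ 2 ≤ 0 := by
        have := hApos₀ z.2
        rw [hz2] at this
        simpa using this
      have hz4 : ‖z.2‖ ^ 2 = 0 := le_antisymm (by nlinarith) (sq_nonneg _)
      have hz5 : z.2 = 0 := by
        rw [pow_eq_zero_iff (by norm_num)] at hz4
        exact norm_eq_zero.mp hz4
      calc z = (z.1, z.2) := rfl
        _ = 0 := by rw [hz1.1, hz5]; rfl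
    have hLbij : Function.Bijective L := by
      have hinj : Function.Injective
          (L : ((EuclideanSpace ℝ (Fin d₁)) × (EuclideanSpace ℝ (Fin d₂))) →ₗ[ℝ]
            ((EuclideanSpace ℝ (Fin d₁)) × (EuclideanSpace ℝ (Fin d₂)))) := by
        rw [← LinearMap.ker_eq_bot, LinearMap.ker_eq_bot']
        exact fun z hz => hker z hz
      exact ⟨hinj, (LinearMap.injective_iff_surjective).mp hinj⟩
    set equivΨ := (LinearEquiv.ofBijective
      (L : ((EuclideanSpace ℝ (Fin d₁)) × (EuclideanSpace ℝ (Fin d₂))) →ₗ[ℝ]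
        ((EuclideanSpace ℝ (Fin d₁)) × (EuclideanSpace ℝ (Fin d₂)))) hLbij).toContinuousLinearEquiv
      with hequivΨdef
    have hcoe : (equivΨ : ((EuclideanSpace ℝ (Fin d₁)) × (EuclideanSpace ℝ (Fin d₂))) →L[ℝ]
        ((EuclideanSpace ℝ (Fin d₁)) × (EuclideanSpace ℝ (Fin d₂)))) = L :=
      ContinuousLinearMap.ext fun z => rfl
    have hstrictΨ : HasStrictFDerivAt Ψ
        (equivΨ : ((EuclideanSpace ℝ (Fin d₁)) × (EuclideanSpace ℝ (Fin d₂))) →L[ℝ]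
          ((EuclideanSpace ℝ (Fin d₁)) × (EuclideanSpace ℝ (Fin d₂)))) (x₀, ystar x₀) := by
      have h1 := (hΨc.contDiffAt (x := (x₀, ystar x₀))).hasStrictFDerivAt (by norm_num)
      rwa [hDΨ.fderiv, ← hcoe] at h1
    set Θ := HasStrictFDerivAt.localInverse Ψ equivΨ (x₀, ystar x₀) hstrictΨ with hΘdef
    have hm : Filter.Tendsto (fun x => (x, ystar x)) (nhds x₀) (nhds (x₀, ystar x₀)) :=
      (continuousAt_id.prodMk (hyscont.continuousAt))
    have hev2 : ∀ᶠ x in nhds x₀, Θ (x, (0 : EuclideanSpace ℝ (Fin d₂))) = (x, ystar x) := by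
      filter_upwards [hm.eventually hstrictΨ.eventually_left_inverse] with x hx
      have hΨx : Ψ (x, ystar x) = (x, (0 : EuclideanSpace ℝ (Fin d₂))) := by
        rw [hΨdef]; simp only; rw [hfoc x]
      rw [← hΨx]
      exact hx
    have hys_ev : (fun x => (Θ (x, (0 : EuclideanSpace ℝ (Fin d₂)))).2) =ᶠ[nhds x₀] ystar :=
      hev2.mono fun x hx => by show (Θ (x, (0 : EuclideanSpace ℝ (Fin d₂)))).2 = ystar x; rw [hx]
    have hΘstrict : HasStrictFDerivAt Θ
        ((equivΨ.symm : ((EuclideanSpace ℝ (Fin d₁)) × (EuclideanSpace ℝ (Fin d₂))) →L[ℝ]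
          ((EuclideanSpace ℝ (Fin d₁)) × (EuclideanSpace ℝ (Fin d₂)))))
        (x₀, (0 : EuclideanSpace ℝ (Fin d₂))) := by
      have h1 := hstrictΨ.to_localInverse
      have hΨx₀ : Ψ (x₀, ystar x₀) = (x₀, (0 : EuclideanSpace ℝ (Fin d₂))) := by
        rw [hΨdef]; simp only; rw [hfoc x₀]
      rwa [hΨx₀] at h1
    have h2 : HasFDerivAt (fun x => (Θ (x, (0 : EuclideanSpace ℝ (Fin d₂)))).2)
        ((snd ℝ (EuclideanSpace ℝ (Fin d₁)) (EuclideanSpace ℝ (Fin d₂))).comp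
          (((equivΨ.symm : ((EuclideanSpace ℝ (Fin d₁)) × (EuclideanSpace ℝ (Fin d₂))) →L[ℝ]
            ((EuclideanSpace ℝ (Fin d₁)) × (EuclideanSpace ℝ (Fin d₂))))).comp
            (inl ℝ (EuclideanSpace ℝ (Fin d₁)) (EuclideanSpace ℝ (Fin d₂))))) x₀ := by
      have ha : HasFDerivAt (fun x : EuclideanSpace ℝ (Fin d₁) =>
          (x, (0 : EuclideanSpace ℝ (Fin d₂))))
          (inl ℝ (EuclideanSpace ℝ (Fin d₁)) (EuclideanSpace ℝ (Fin d₂))) x₀ :=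
        hasFDerivAt_prodMk_left x₀ 0
      have hb := hΘstrict.hasFDerivAt.comp x₀ ha
      exact ((snd ℝ (EuclideanSpace ℝ (Fin d₁))
        (EuclideanSpace ℝ (Fin d₂))).hasFDerivAt).comp x₀ hb
    have h3 : HasFDerivAt ystar
        ((snd ℝ (EuclideanSpace ℝ (Fin d₁)) (EuclideanSpace ℝ (Fin d₂))).comp
          (((equivΨ.symm : ((EuclideanSpace ℝ (Fin d₁)) × (EuclideanSpace ℝ (Fin d₂))) →L[ℝ]
            ((EuclideanSpace ℝ (Fin d₁)) × (EuclideanSpace ℝ (Fin d₂))))).comp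
            (inl ℝ (EuclideanSpace ℝ (Fin d₁)) (EuclideanSpace ℝ (Fin d₂))))) x₀ :=
      h2.congr_of_eventuallyEq hys_ev.symm
    -- identify the derivative with `Dystar x₀`
    have hDy : Dystar x₀ =
        -((Aeq.symm : (EuclideanSpace ℝ (Fin d₂)) →L[ℝ] (EuclideanSpace ℝ (Fin d₂))).comp
          (B (x₀, ystar x₀))) := by
      rw [hDystar x₀, hA_eq x₀ (ystar x₀), hB_eq x₀ (ystar x₀), ← hAeq_coe,
        ringInverse_of_clequiv]
    have hfinal : (snd ℝ (EuclideanSpace ℝ (Fin d₁)) (EuclideanSpace ℝ (Fin d₂))).comp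
        (((equivΨ.symm : ((EuclideanSpace ℝ (Fin d₁)) × (EuclideanSpace ℝ (Fin d₂))) →L[ℝ]
          ((EuclideanSpace ℝ (Fin d₁)) × (EuclideanSpace ℝ (Fin d₂))))).comp
          (inl ℝ (EuclideanSpace ℝ (Fin d₁)) (EuclideanSpace ℝ (Fin d₂)))) = Dystar x₀ := by
      refine ContinuousLinearMap.ext fun u => ?_
      have hz : equivΨ (equivΨ.symm (u, (0 : EuclideanSpace ℝ (Fin d₂)))) =
          (u, (0 : EuclideanSpace ℝ (Fin d₂))) := equivΨ.apply_symm_apply _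
      set z := equivΨ.symm (u, (0 : EuclideanSpace ℝ (Fin d₂))) with hzdef
      have hz' : L z = (u, (0 : EuclideanSpace ℝ (Fin d₂))) := by
        rw [← hcoe]; exact hz
      have hz1 : z.1 = u ∧ DG z = 0 := by
        have := Prod.ext_iff.mp hz'
        simpa [hLdef] using this
      have hzz : z = (u, z.2) := Prod.ext hz1.1 rfl
      have hsplit : DG z = B (x₀, ystar x₀) u + A (x₀, ystar x₀) z.2 := by
        rw [hBdef, hAdef]
        simp only [ContinuousLinearMap.coe_comp', Function.comp_apply, inl_apply, inr_apply]
        rw [← map_add]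
        rw [hzz]
        norm_num
        rfl
      have hAz : A (x₀, ystar x₀) z.2 = -(B (x₀, ystar x₀) u) := by
        rw [hz1.2] at hsplit
        exact eq_neg_of_add_eq_zero_right hsplit.symm
      have hz2 : z.2 = -(Aeq.symm (B (x₀, ystar x₀) u)) := by
        apply Aeq.injective
        have h5 : Aeq z.2 = A (x₀, ystar x₀) z.2 := by
          rw [← hAeq_coe]; rfl
        rw [h5, hAz, map_neg, Aeq.apply_symm_apply]
      show z.2 = Dystar x₀ u
      rw [hz2, hDy]
      simp
    rwa [hfinal] at h3
  have hys_d : Differentiable ℝ ystar := fun x => (hys_deriv x).differentiableAt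
  have hid : ∀ x, HasFDerivAt (fun x' => (x', ystar x'))
      ((ContinuousLinearMap.id ℝ (EuclideanSpace ℝ (Fin d₁))).prod (Dystar x)) x := fun x =>
    (hasFDerivAt_id x).prodMk (hys_deriv x)
  have hΦfun : Φ = fun x => f (x, ystar x) := funext hΦ
  have hΦderiv : ∀ x, HasFDerivAt Φ ((fderiv ℝ f (x, ystar x)).comp
      ((ContinuousLinearMap.id ℝ (EuclideanSpace ℝ (Fin d₁))).prod (Dystar x))) x := fun x => by
    rw [hΦfun]
    exact ((hfd _).hasFDerivAt).comp x (hid x)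
  have hΦdiff : Differentiable ℝ Φ := fun x => (hΦderiv x).differentiableAt
  -- second derivative of `g` and inner-product formulas for the blocks
  set D2 := fderiv ℝ (fderiv ℝ g) with hD2def
  have hg_diff2 : Differentiable ℝ (fderiv ℝ g) :=
    (hg_smooth.fderiv_right (m := 1) (by norm_num)).differentiable (by norm_num)
  set T : (((EuclideanSpace ℝ (Fin d₁)) × (EuclideanSpace ℝ (Fin d₂))) →L[ℝ] ℝ) →L[ℝ]
      (EuclideanSpace ℝ (Fin d₂)) :=
    (fromDualL.toContinuousLinearMap).comp
      ((compL ℝ (EuclideanSpace ℝ (Fin d₂))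
        ((EuclideanSpace ℝ (Fin d₁)) × (EuclideanSpace ℝ (Fin d₂))) ℝ).flip
        (inr ℝ (EuclideanSpace ℝ (Fin d₁)) (EuclideanSpace ℝ (Fin d₂)))) with hTdef
  set S : (((EuclideanSpace ℝ (Fin d₁)) × (EuclideanSpace ℝ (Fin d₂))) →L[ℝ] ℝ) →L[ℝ]
      (EuclideanSpace ℝ (Fin d₁)) :=
    (fromDualL.toContinuousLinearMap).comp
      ((compL ℝ (EuclideanSpace ℝ (Fin d₁))
        ((EuclideanSpace ℝ (Fin d₁)) × (EuclideanSpace ℝ (Fin d₂))) ℝ).flip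
        (inl ℝ (EuclideanSpace ℝ (Fin d₁)) (EuclideanSpace ℝ (Fin d₂)))) with hSdef
  have hGYgT : GYg = fun q => T (fderiv ℝ g q) := by
    rw [hGYgdef]; rfl
  have hGXgS : GXg = fun q => S (fderiv ℝ g q) := by
    rw [hGXgdef]; rfl
  have hfderivGYg : ∀ p, fderiv ℝ GYg p = T.comp (D2 p) := fun p => by
    rw [hGYgT]
    exact (T.hasFDerivAt.comp p ((hg_diff2 p).hasFDerivAt)).fderiv
  have hfderivGXg : ∀ p, fderiv ℝ GXg p = S.comp (D2 p) := fun p => by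
    rw [hGXgS]
    exact (S.hasFDerivAt.comp p ((hg_diff2 p).hasFDerivAt)).fderiv
  have hA_inner : ∀ p (v w : EuclideanSpace ℝ (Fin d₂)),
      ⟪A p v, w⟫ = D2 p (0, v) (0, w) := by
    intro p v w
    rw [hAdef]
    simp only [ContinuousLinearMap.coe_comp', Function.comp_apply, inr_apply]
    rw [hfderivGYg p]
    show ⟪fromDualL ((D2 p (0, v)).comp
      (inr ℝ (EuclideanSpace ℝ (Fin d₁)) (EuclideanSpace ℝ (Fin d₂)))), w⟫ = _
    rw [inner_fromDualL]
    simp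
  have hB_inner : ∀ p (u : EuclideanSpace ℝ (Fin d₁)) (w : EuclideanSpace ℝ (Fin d₂)),
      ⟪B p u, w⟫ = D2 p (u, 0) (0, w) := by
    intro p u w
    rw [hBdef]
    simp only [ContinuousLinearMap.coe_comp', Function.comp_apply, inl_apply]
    rw [hfderivGYg p]
    show ⟪fromDualL ((D2 p (u, 0)).comp
      (inr ℝ (EuclideanSpace ℝ (Fin d₁)) (EuclideanSpace ℝ (Fin d₂)))), w⟫ = _
    rw [inner_fromDualL]
    simp
  have hC_inner : ∀ p (w : EuclideanSpace ℝ (Fin d₂)) (u : EuclideanSpace ℝ (Fin d₁)),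
      ⟪C p w, u⟫ = D2 p (0, w) (u, 0) := by
    intro p w u
    rw [hCdef]
    simp only [ContinuousLinearMap.coe_comp', Function.comp_apply, inr_apply]
    rw [hfderivGXg p]
    show ⟪fromDualL ((D2 p (0, w)).comp
      (inl ℝ (EuclideanSpace ℝ (Fin d₁)) (EuclideanSpace ℝ (Fin d₂)))), u⟫ = _
    rw [inner_fromDualL]
    simp
  have hsymm : ∀ p (v w : (EuclideanSpace ℝ (Fin d₁)) × (EuclideanSpace ℝ (Fin d₂))),
      D2 p v w = D2 p w v := fun p =>
    (hg_smooth.contDiffAt.isSymmSndFDerivAt (by norm_num)).eq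
  -- inner-product formulas for the gradients of `f`
  have hGXf_inner : ∀ p (u : EuclideanSpace ℝ (Fin d₁)),
      ⟪GXf p, u⟫ = fderiv ℝ f p (u, 0) := by
    intro p u
    rw [hGXfdef]
    show ⟪fromDualL ((fderiv ℝ f p).comp
      (inl ℝ (EuclideanSpace ℝ (Fin d₁)) (EuclideanSpace ℝ (Fin d₂)))), u⟫ = _
    rw [inner_fromDualL]
    simp
  have hGYf_inner : ∀ p (w : EuclideanSpace ℝ (Fin d₂)),
      ⟪GYf p, w⟫ = fderiv ℝ f p (0, w) := by
    intro p w
    rw [hGYfdef]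
    show ⟪fromDualL ((fderiv ℝ f p).comp
      (inr ℝ (EuclideanSpace ℝ (Fin d₁)) (EuclideanSpace ℝ (Fin d₂)))), w⟫ = _
    rw [inner_fromDualL]
    simp
  -- the joint hypergradient
  set Barf : (EuclideanSpace ℝ (Fin d₁)) × (EuclideanSpace ℝ (Fin d₂)) →
      (EuclideanSpace ℝ (Fin d₁)) :=
    fun p => GXf p - (C p) ((Ring.inverse (A p)) (GYf p)) with hBarfdef
  have hbarf_eq : ∀ x y, barf x y = Barf (x, y) := fun x y => by
    rw [hbarf, hBarfdef]
    simp only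
    rw [hGXf_eq, hGYf_eq, hC_eq, hA_eq]
  -- key identity : the gradient of `Φ` is the hypergradient along `ystar`
  have hgradPhi : ∀ x, gradient Φ x = Barf (x, ystar x) := by
    intro x
    have hApx := hApos (x, ystar x)
    set Aeqx := posDefEquiv hμg hApx with hAeqxdef
    have hAeqx_coe : (Aeqx : (EuclideanSpace ℝ (Fin d₂)) →L[ℝ] (EuclideanSpace ℝ (Fin d₂)))
        = A (x, ystar x) := posDefEquiv_coe hμg hApx
    have hRinv : Ring.inverse (A (x, ystar x)) =
        (Aeqx.symm : (EuclideanSpace ℝ (Fin d₂)) →L[ℝ] (EuclideanSpace ℝ (Fin d₂))) := by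
      rw [← hAeqx_coe, ringInverse_of_clequiv]
    have hDy : Dystar x =
        -((Aeqx.symm : (EuclideanSpace ℝ (Fin d₂)) →L[ℝ] (EuclideanSpace ℝ (Fin d₂))).comp
          (B (x, ystar x))) := by
      rw [hDystar x, hA_eq x (ystar x), hB_eq x (ystar x), hRinv]
    refine ext_inner_right ℝ fun u => ?_
    rw [gradient_eq_fromDualL, (hΦderiv x).fderiv, inner_fromDualL]
    -- left side : `fderiv f (u, Dystar x u)`
    have hsplit : ((u, Dystar x u) : (EuclideanSpace ℝ (Fin d₁)) × (EuclideanSpace ℝ (Fin d₂)))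
        = (u, 0) + (0, Dystar x u) := by simp
    have hleft : ((fderiv ℝ f (x, ystar x)).comp
        ((ContinuousLinearMap.id ℝ (EuclideanSpace ℝ (Fin d₁))).prod (Dystar x))) u
        = fderiv ℝ f (x, ystar x) (u, 0) + fderiv ℝ f (x, ystar x) (0, Dystar x u) := by
      simp only [ContinuousLinearMap.coe_comp', Function.comp_apply,
        ContinuousLinearMap.prod_apply, ContinuousLinearMap.coe_id', id_eq]
      rw [hsplit, map_add]
    rw [hleft]
    -- right side
    rw [hBarfdef]
    simp only
    rw [hRinv, inner_sub_left]
    set s := Aeqx.symm (GYf (x, ystar x)) with hsdef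
    set t := Aeqx.symm (B (x, ystar x) u) with htdef
    have hAs : A (x, ystar x) s = GYf (x, ystar x) := by
      rw [hsdef, ← hAeqx_coe]
      exact Aeqx.apply_symm_apply _
    have hAt : A (x, ystar x) t = B (x, ystar x) u := by
      rw [htdef, ← hAeqx_coe]
      exact Aeqx.apply_symm_apply _
    have hkey : ⟪C (x, ystar x) s, u⟫ = ⟪GYf (x, ystar x), t⟫ := by
      calc ⟪C (x, ystar x) s, u⟫ = D2 (x, ystar x) (0, s) (u, 0) := hC_inner _ _ _
        _ = D2 (x, ystar x) (u, 0) (0, s) := hsymm _ _ _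
        _ = ⟪B (x, ystar x) u, s⟫ := (hB_inner _ _ _).symm
        _ = ⟪A (x, ystar x) t, s⟫ := by rw [hAt]
        _ = D2 (x, ystar x) (0, t) (0, s) := hA_inner _ _ _
        _ = D2 (x, ystar x) (0, s) (0, t) := hsymm _ _ _
        _ = ⟪A (x, ystar x) s, t⟫ := (hA_inner _ _ _).symm
        _ = ⟪GYf (x, ystar x), t⟫ := by rw [hAs]
    have hDyu : Dystar x u = -t := by
      rw [hDy, htdef]
      simp
    rw [hDyu, ← hGXf_inner (x, ystar x) u]
    have : fderiv ℝ f (x, ystar x) (0, -t) = -⟪GYf (x, ystar x), t⟫ := by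
      rw [← hGYf_inner (x, ystar x) (-t)]
      rw [inner_neg_right]
    have hcs : (Aeqx.symm : (EuclideanSpace ℝ (Fin d₂)) →L[ℝ] (EuclideanSpace ℝ (Fin d₂)))
        (GYf (x, ystar x)) = s := rfl
    rw [this, hcs, hkey]
    ring
  -- differentiability of the joint hypergradient
  have hA_cd : ContDiff ℝ 1 A := by
    rw [hAdef]
    exact ((compL ℝ (EuclideanSpace ℝ (Fin d₂))
      ((EuclideanSpace ℝ (Fin d₁)) × (EuclideanSpace ℝ (Fin d₂)))
      (EuclideanSpace ℝ (Fin d₂))).flip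
      (inr ℝ (EuclideanSpace ℝ (Fin d₁)) (EuclideanSpace ℝ (Fin d₂)))).contDiff.comp
      (hGYg_smooth.fderiv_right (by norm_num))
  have hC_cd : ContDiff ℝ 1 C := by
    rw [hCdef]
    exact ((compL ℝ (EuclideanSpace ℝ (Fin d₂))
      ((EuclideanSpace ℝ (Fin d₁)) × (EuclideanSpace ℝ (Fin d₂)))
      (EuclideanSpace ℝ (Fin d₁))).flip
      (inr ℝ (EuclideanSpace ℝ (Fin d₁)) (EuclideanSpace ℝ (Fin d₂)))).contDiff.comp
      (hGXg_smooth.fderiv_right (by norm_num))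
  have hGXf_d : Differentiable ℝ GXf := hGXf_smooth.differentiable (by norm_num)
  have hGYf_d : Differentiable ℝ GYf := hGYf_smooth.differentiable (by norm_num)
  have hRinv_diff : ∀ p, DifferentiableAt ℝ (fun q => Ring.inverse (A q)) p := by
    intro p
    have hu : ContDiffAt ℝ 1 (Ring.inverse :
        ((EuclideanSpace ℝ (Fin d₂)) →L[ℝ] (EuclideanSpace ℝ (Fin d₂))) →
        ((EuclideanSpace ℝ (Fin d₂)) →L[ℝ] (EuclideanSpace ℝ (Fin d₂)))) (A p) := by
      have h1 := contDiffAt_ringInverse ℝ (n := 1) (posDefEquiv hμg (hApos p)).toUnit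
      have h2 : (((posDefEquiv hμg (hApos p)).toUnit :
          ((EuclideanSpace ℝ (Fin d₂)) →L[ℝ] (EuclideanSpace ℝ (Fin d₂)))ˣ) :
          (EuclideanSpace ℝ (Fin d₂)) →L[ℝ] (EuclideanSpace ℝ (Fin d₂))) = A p :=
        posDefEquiv_coe hμg (hApos p)
      rwa [h2] at h1
    exact (hu.comp p (hA_cd.contDiffAt)).differentiableAt (by norm_num)
  have hBarf_diff : ∀ p, DifferentiableAt ℝ Barf p := by
    intro p
    rw [hBarfdef]
    refine (hGXf_d p).sub ?_
    exact ((hC_cd.differentiable (by norm_num)) p).clm_apply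
      ((hRinv_diff p).clm_apply (hGYf_d p))
  -- assemble the three claims
  refine ⟨hΦdiff, ?_, ?_⟩
  · have hfun : (fun x => gradient Φ x) = fun x => Barf (x, ystar x) := funext hgradPhi
    rw [hfun]
    exact fun x => (hBarf_diff _).comp x (hid x).differentiableAt
  · intro x
    have hfun : (fun x' => gradient Φ x') = fun x' => Barf (x', ystar x') := funext hgradPhi
    have hL : fderiv ℝ (fun x' => gradient Φ x') x =
        (fderiv ℝ Barf (x, ystar x)).comp
          ((ContinuousLinearMap.id ℝ (EuclideanSpace ℝ (Fin d₁))).prod (Dystar x)) := by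
      rw [hfun]
      exact ((hBarf_diff (x, ystar x)).hasFDerivAt.comp x (hid x)).fderiv
    have h1fun : (fun x' => barf x' (ystar x)) = fun x' => Barf (x', ystar x) :=
      funext fun x' => hbarf_eq x' (ystar x)
    have hR1 : fderiv ℝ (fun x' => barf x' (ystar x)) x =
        (fderiv ℝ Barf (x, ystar x)).comp
          (inl ℝ (EuclideanSpace ℝ (Fin d₁)) (EuclideanSpace ℝ (Fin d₂))) := by
      rw [h1fun]
      exact (hasFDerivAt_slice_left (hBarf_diff (x, ystar x))).fderiv
    have h2fun : (fun y' => barf x y') = fun y' => Barf (x, y') :=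
      funext fun y' => hbarf_eq x y'
    have hR2 : fderiv ℝ (fun y' => barf x y') (ystar x) =
        (fderiv ℝ Barf (x, ystar x)).comp
          (inr ℝ (EuclideanSpace ℝ (Fin d₁)) (EuclideanSpace ℝ (Fin d₂))) := by
      rw [h2fun]
      exact (hasFDerivAt_slice_right (hBarf_diff (x, ystar x))).fderiv
    rw [hL, hR1, hR2]
    refine ContinuousLinearMap.ext fun u => ?_
    simp only [ContinuousLinearMap.coe_comp', Function.comp_apply,
      ContinuousLinearMap.add_apply, ContinuousLinearMap.prod_apply,
      ContinuousLinearMap.coe_id', id_eq, inl_apply, inr_apply]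
    rw [show ((u, Dystar x u) : (EuclideanSpace ℝ (Fin d₁)) × (EuclideanSpace ℝ (Fin d₂)))
      = (u, 0) + (0, Dystar x u) by simp, map_add]
end

section
/- Let ℒ : ℝ^p → ℝ be twice continuously differentiable with −L I ⪯ ∇²ℒ(θ') ⪯ L I for all θ' (L-smoothness), and let λ > L. Define 𝒥(θ, θ') = ℒ(θ') + (λ/2)‖θ' − θ‖². Then: (a) for each θ ∈ ℝ^p, the map θ' ↦ 𝒥(θ, θ') satisfies ∇²_{θ'θ'} 𝒥(θ, θ') ⪰ (λ − L) I, so it is (λ−L)-strongly convex and has a unique minimizer θ*(θ); and (b) the function Φ(θ) = ℒ(θ*(θ)) is differentiable with ∇Φ(θ) = λ² [∇²ℒ(θ*(θ)) + λ I]^{-1} (θ − θ*(θ)). -/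
open scoped RealInnerProductSpace

section AuxMamlBilevel

set_option linter.unusedSectionVars false

variable {F : Type*} [NormedAddCommGroup F] [InnerProductSpace ℝ F] [CompleteSpace F]

theorem descent_ineq' {f : F → ℝ} {g : F → F} {g' : F → F →L[ℝ] F} {c : ℝ}
    (hfg : ∀ x, HasGradientAt f (g x) x)
    (hg : ∀ x, HasFDerivAt g (g' x) x)
    (hc : ∀ x v, c * ‖v‖ ^ 2 ≤ ⟪g' x v, v⟫) (x y : F) :
    f x + ⟪g x, y - x⟫ + c / 2 * ‖y - x‖ ^ 2 ≤ f y := by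
  set d := y - x with hd
  set γ : ℝ → F := fun t => x + t • d with hγ
  have hγd : ∀ t : ℝ, HasDerivAt γ d t := by
    intro t
    have h := ((hasDerivAt_id t).smul_const d).const_add x
    rw [one_smul] at h
    exact h
  -- derivative of ψ t = ⟪g (γ t), d⟫
  have hψ : ∀ t : ℝ, HasDerivAt (fun u => ⟪g (γ u), d⟫) ⟪g' (γ t) d, d⟫ t := by
    intro t
    have h1 : HasDerivAt (fun u => g (γ u)) (g' (γ t) d) t :=
      (hg (γ t)).comp_hasDerivAt t (hγd t)
    simpa using h1.inner ℝ (hasDerivAt_const t d)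
  -- step 1 : ⟪g (γ t) - g x, d⟫ ≥ c * t * ‖d‖^2 for 0 < t
  have step1 : ∀ t : ℝ, 0 < t → c * t * ‖d‖ ^ 2 ≤ ⟪g (γ t) - g (γ 0), d⟫ := by
    intro t ht
    obtain ⟨ξ, _, hξ⟩ := exists_hasDerivAt_eq_slope (fun u => ⟪g (γ u), d⟫)
      (fun u => ⟪g' (γ u) d, d⟫) ht
      (fun u _ => (hψ u).continuousAt.continuousWithinAt) (fun u _ => hψ u)
    have : c * ‖d‖ ^ 2 ≤ (⟪g (γ t), d⟫ - ⟪g (γ 0), d⟫) / (t - 0) := hξ ▸ hc (γ ξ) d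
    rw [inner_sub_left]
    rw [sub_zero] at this
    calc c * t * ‖d‖ ^ 2 = t * (c * ‖d‖ ^ 2) := by ring
    _ ≤ t * ((⟪g (γ t), d⟫ - ⟪g (γ 0), d⟫) / t) := by
        exact mul_le_mul_of_nonneg_left this ht.le
    _ = ⟪g (γ t), d⟫ - ⟪g (γ 0), d⟫ := by field_simp
  -- derivative of χ
  have hχ : ∀ t : ℝ, HasDerivAt
      (fun u => f (γ u) - u * ⟪g x, d⟫ - c / 2 * u ^ 2 * ‖d‖ ^ 2)
      (⟪g (γ t), d⟫ - ⟪g x, d⟫ - c * t * ‖d‖ ^ 2) t := by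
    intro t
    have h1 : HasDerivAt (fun u => f (γ u)) ⟪g (γ t), d⟫ t := by
      have := ((hfg (γ t)).hasFDerivAt).comp_hasDerivAt t (hγd t)
      simpa [InnerProductSpace.toDual_apply_apply, Function.comp_def] using this
    have h2 : HasDerivAt (fun u : ℝ => u * ⟪g x, d⟫) ⟪g x, d⟫ t := by
      simpa using (hasDerivAt_id t).mul_const ⟪g x, d⟫
    have h3 : HasDerivAt (fun u : ℝ => c / 2 * u ^ 2 * ‖d‖ ^ 2) (c * t * ‖d‖ ^ 2) t := by
      have : HasDerivAt (fun u : ℝ => u ^ 2) (2 * t) t := by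
        simpa using hasDerivAt_pow 2 t
      have := (this.const_mul (c / 2)).mul_const (‖d‖ ^ 2)
      exact this.congr_deriv (by ring)
    exact (h1.sub h2).sub h3
  -- MVT on χ over [0,1]
  obtain ⟨ξ, hξmem, hξ⟩ := exists_hasDerivAt_eq_slope
    (fun u => f (γ u) - u * ⟪g x, d⟫ - c / 2 * u ^ 2 * ‖d‖ ^ 2)
    (fun t => ⟪g (γ t), d⟫ - ⟪g x, d⟫ - c * t * ‖d‖ ^ 2) one_pos
    (fun u _ => (hχ u).continuousAt.continuousWithinAt) (fun u _ => hχ u)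
  have hγ0 : γ 0 = x := by simp [hγ]
  have hγ1 : γ 1 = y := by simp [hγ, hd]
  have hpos : 0 ≤ ⟪g (γ ξ), d⟫ - ⟪g x, d⟫ - c * ξ * ‖d‖ ^ 2 := by
    have := step1 ξ hξmem.1
    rw [inner_sub_left, hγ0] at this
    linarith
  rw [hξ] at hpos
  rw [hγ0, hγ1] at hpos
  have : 0 ≤ f y - ⟪g x, d⟫ - c / 2 * ‖d‖ ^ 2 - f x := by
    have h := hpos
    simp only [sub_zero, div_one, one_pow, one_mul, zero_mul, zero_pow] at h
    linarith [h]
  linarith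

theorem strongConvexOn_of_descent' {f : F → ℝ} {g : F → F} {m : ℝ}
    (hkey : ∀ x y : F, f x + ⟪g x, y - x⟫ + m / 2 * ‖y - x‖ ^ 2 ≤ f y) :
    StrongConvexOn Set.univ m f := by
  refine ⟨convex_univ, ?_⟩
  intro x _ y _ a b ha hb hab
  set z := a • x + b • y with hz
  have hxz : x - z = b • (x - y) := by
    rw [hz]; have : a = 1 - b := by linarith
    rw [this]; module
  have hyz : y - z = a • (y - x) := by
    rw [hz]; have : b = 1 - a := by linarith
    rw [this]; module
  have h1 := hkey z x
  have h2 := hkey z y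
  have hnx : ‖x - z‖ ^ 2 = b ^ 2 * ‖x - y‖ ^ 2 := by
    rw [hxz, norm_smul, mul_pow]; simp [abs_of_nonneg hb]
  have hny : ‖y - z‖ ^ 2 = a ^ 2 * ‖x - y‖ ^ 2 := by
    rw [hyz, norm_smul, mul_pow, norm_sub_rev y x]
    simp [abs_of_nonneg ha]
  have hinner : a * ⟪g z, x - z⟫ + b * ⟪g z, y - z⟫ = 0 := by
    have hv : a • (x - z) + b • (y - z) = (0 : F) := by
      rw [hxz, hyz]; module
    have h := congrArg (fun w => ⟪g z, w⟫) hv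
    simpa [inner_add_right, real_inner_smul_right] using h
  have hc1 := mul_le_mul_of_nonneg_left h1 ha
  have hc2 := mul_le_mul_of_nonneg_left h2 hb
  have h := add_le_add hc1 hc2
  have expand : a * (f z + ⟪g z, x - z⟫ + m / 2 * ‖x - z‖ ^ 2)
        + b * (f z + ⟪g z, y - z⟫ + m / 2 * ‖y - z‖ ^ 2)
      = (a + b) * f z + (a * ⟪g z, x - z⟫ + b * ⟪g z, y - z⟫)
        + m / 2 * (a * ‖x - z‖ ^ 2 + b * ‖y - z‖ ^ 2) := by ring
  rw [expand, hab, hinner, hnx, hny, one_mul, add_zero] at h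
  have e2 : a * (b ^ 2 * ‖x - y‖ ^ 2) + b * (a ^ 2 * ‖x - y‖ ^ 2)
      = a * b * ((a + b) * ‖x - y‖ ^ 2) := by ring
  rw [e2, hab, one_mul] at h
  simp only [smul_eq_mul]
  linarith

/-- Existence and uniqueness of the global minimizer. -/

theorem existsUnique_min' {f : F → ℝ} {g : F → F} {m : ℝ} (hm : 0 < m)
    [FiniteDimensional ℝ F]
    (hfg : ∀ x, HasGradientAt f (g x) x)
    (hkey : ∀ x y : F, f x + ⟪g x, y - x⟫ + m / 2 * ‖y - x‖ ^ 2 ≤ f y) :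
    ∃! z : F, ∀ y, f z ≤ f y := by
  have hcont : Continuous f :=
    continuous_iff_continuousAt.2 fun x => (hfg x).hasFDerivAt.differentiableAt.continuousAt
  set R : ℝ := 2 / m * ‖g 0‖ + 1 with hR
  have hRpos : 0 < R := by positivity
  obtain ⟨z, hzmem, hzmin⟩ := (isCompact_closedBall (0 : F) R).exists_isMinOn
    ⟨0, Metric.mem_closedBall_self hRpos.le⟩ hcont.continuousOn
  have hglobal : ∀ y, f z ≤ f y := by
    intro y
    by_cases hy : y ∈ Metric.closedBall (0 : F) R
    · exact hzmin hy
    · have hy' : R < ‖y‖ := by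
        simpa [Metric.mem_closedBall, dist_zero_right] using hy
      have h0 : f z ≤ f 0 := hzmin (Metric.mem_closedBall_self hRpos.le)
      have hk := hkey 0 y
      have hinner : -(‖g 0‖ * ‖y‖) ≤ ⟪g (0 : F), y - 0⟫ := by
        rw [sub_zero]
        exact neg_le_of_abs_le (abs_real_inner_le_norm _ _)
      have hnorm : ‖y - (0 : F)‖ = ‖y‖ := by simp
      rw [hnorm] at hk
      have hf0y : f 0 ≤ f y := by
        have hyR : 2 / m * ‖g 0‖ + 1 ≤ ‖y‖ := le_of_lt (hR ▸ hy')
        have h1 : ‖g 0‖ * ‖y‖ ≤ m / 2 * ‖y‖ ^ 2 := by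
          have hyn : 0 ≤ ‖y‖ := norm_nonneg y
          have : ‖g 0‖ ≤ m / 2 * ‖y‖ := by
            have h2 : 2 / m * ‖g 0‖ ≤ ‖y‖ - 1 := by linarith
            have h3 : ‖g 0‖ ≤ m / 2 * (‖y‖ - 1) := by
              have := mul_le_mul_of_nonneg_left h2 (by positivity : (0:ℝ) ≤ m / 2)
              calc ‖g 0‖ = m / 2 * (2 / m * ‖g 0‖) := by field_simp
              _ ≤ m / 2 * (‖y‖ - 1) := this
            nlinarith
          nlinarith
        linarith
      linarith
  refine ⟨z, hglobal, ?_⟩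
  intro w hw
  have hgz : g z = 0 := by
    have hloc : IsLocalMin f z := Filter.Eventually.of_forall hglobal
    have := hloc.hasFDerivAt_eq_zero (hfg z).hasFDerivAt
    have h2 := congrArg (InnerProductSpace.toDual ℝ F).symm this
    simpa using h2
  have hgw : g w = 0 := by
    have hloc : IsLocalMin f w := Filter.Eventually.of_forall hw
    have := hloc.hasFDerivAt_eq_zero (hfg w).hasFDerivAt
    have h2 := congrArg (InnerProductSpace.toDual ℝ F).symm this
    simpa using h2
  have h1 := hkey w z
  rw [hgw] at h1
  simp only [inner_zero_left, add_zero, zero_add] at h1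
  have h2 : f z ≤ f w := hglobal w
  have h3 : f w ≤ f z := hw z
  have : ‖z - w‖ ^ 2 ≤ 0 := by nlinarith
  have : ‖z - w‖ = 0 := by nlinarith [norm_nonneg (z - w), sq_nonneg ‖z - w‖]
  have := norm_eq_zero.mp this
  have : z = w := by rwa [sub_eq_zero] at this
  exact this.symm

end AuxMamlBilevel

set_option maxHeartbeats 1000000 in
/-- (MAML bilevel structure.) Let `ℒ` be `C²` with `−L I ⪯ ∇²ℒ ⪯ L I`
and let `λ > L`. Define `𝒥(θ, θ') = ℒ(θ') + (λ/2)‖θ' − θ‖²`. Then (a) for each `θ`,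
`θ' ↦ 𝒥(θ, θ')` has Hessian `⪰ (λ − L) I`, is `(λ−L)`-strongly convex and has a unique
minimizer `θ*(θ)`; and (b) `Φ(θ) = ℒ(θ*(θ))` is differentiable with
`∇Φ(θ) = λ²[∇²ℒ(θ*(θ)) + λI]⁻¹(θ − θ*(θ))`. -/
theorem maml_bilevel
    {p : ℕ}
    (L : EuclideanSpace ℝ (Fin p) → ℝ)
    (Lc lam : ℝ) (hLc : 0 < Lc) (hlam : Lc < lam)
    (hL_smooth : ContDiff ℝ 2 L)
    (hL_hess : ∀ θ' (v : EuclideanSpace ℝ (Fin p)),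
      -Lc * ‖v‖ ^ 2 ≤ ⟪fderiv ℝ (gradient L) θ' v, v⟫ ∧
        ⟪fderiv ℝ (gradient L) θ' v, v⟫ ≤ Lc * ‖v‖ ^ 2)
    -- the inner objective `𝒥(θ, θ') = ℒ(θ') + (λ/2)‖θ' − θ‖²`
    (J : EuclideanSpace ℝ (Fin p) → EuclideanSpace ℝ (Fin p) → ℝ)
    (hJ : ∀ θ θ', J θ θ' = L θ' + (lam / 2) * ‖θ' - θ‖ ^ 2) :
    -- (a) strong convexity of the inner objective and uniqueness of the inner minimizer
    ((∀ θ θ' (v : EuclideanSpace ℝ (Fin p)),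
        (lam - Lc) * ‖v‖ ^ 2 ≤ ⟪fderiv ℝ (gradient (J θ)) θ' v, v⟫) ∧
      (∀ θ, StrongConvexOn Set.univ (lam - Lc) (J θ)) ∧
      (∀ θ, ∃! θs : EuclideanSpace ℝ (Fin p), ∀ θ', J θ θs ≤ J θ θ')) ∧
    -- (b) the hypergradient formula for `Φ(θ) = ℒ(θ*(θ))`
    (∃ θstar : EuclideanSpace ℝ (Fin p) → EuclideanSpace ℝ (Fin p),
      (∀ θ θ', J θ (θstar θ) ≤ J θ θ') ∧
      Differentiable ℝ (fun θ => L (θstar θ)) ∧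
      ∀ θ, gradient (fun θ'' => L (θstar θ'')) θ =
        lam ^ 2 •
          (Ring.inverse (fderiv ℝ (gradient L) (θstar θ) +
              lam • ContinuousLinearMap.id ℝ (EuclideanSpace ℝ (Fin p))))
            (θ - θstar θ)) := by
  classical
  have hJfun : ∀ θ, J θ = fun θ' => L θ' + lam / 2 * ‖θ' - θ‖ ^ 2 := fun θ => funext (hJ θ)
  set G : EuclideanSpace ℝ (Fin p) → EuclideanSpace ℝ (Fin p) := gradient L with hGdef
  have hLd : Differentiable ℝ L := hL_smooth.differentiable (by norm_num)
  have hGc : ContDiff ℝ 1 G := by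
    have h1 : ContDiff ℝ 1 (fderiv ℝ L) := hL_smooth.fderiv_right (by norm_num)
    have h2 := ((InnerProductSpace.toDual ℝ
      (EuclideanSpace ℝ (Fin p))).symm.toContinuousLinearEquiv).contDiff.comp h1
    convert h2 using 1
    funext x; rfl
  have hGdiff : ∀ x, HasFDerivAt G (fderiv ℝ G x) x :=
    fun x => ((hGc.differentiable one_ne_zero) x).hasFDerivAt
  -- gradient of the quadratic part
  have hsq : ∀ (θ x : EuclideanSpace ℝ (Fin p)),
      HasFDerivAt (fun y : EuclideanSpace ℝ (Fin p) => lam / 2 * ‖y - θ‖ ^ 2)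
        (InnerProductSpace.toDual ℝ (EuclideanSpace ℝ (Fin p)) (lam • (x - θ))) x := by
    intro θ x
    have hid : HasFDerivAt (fun y : EuclideanSpace ℝ (Fin p) => y - θ)
        (ContinuousLinearMap.id ℝ (EuclideanSpace ℝ (Fin p))) x :=
      (hasFDerivAt_id x).sub_const θ
    have hinner := (hid.inner ℝ hid).const_mul (lam / 2)
    have heq : (fun y : EuclideanSpace ℝ (Fin p) => lam / 2 * ⟪y - θ, y - θ⟫)
        = fun y : EuclideanSpace ℝ (Fin p) => lam / 2 * ‖y - θ‖ ^ 2 := by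
      funext y; rw [real_inner_self_eq_norm_sq]
    rw [heq] at hinner
    refine hinner.congr_fderiv ?_
    ext w : 1
    simp only [ContinuousLinearMap.smul_apply, ContinuousLinearMap.comp_apply,
      ContinuousLinearMap.prod_apply, ContinuousLinearMap.id_apply, fderivInnerCLM_apply,
      InnerProductSpace.toDual_apply_apply, real_inner_smul_left, smul_eq_mul]
    rw [real_inner_comm w (x - θ)]
    ring
  have hJgrad : ∀ θ x, HasGradientAt (J θ) (G x + lam • (x - θ)) x := by
    intro θ x
    rw [hJfun θ, hasGradientAt_iff_hasFDerivAt]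
    have h1 : HasFDerivAt L
        (InnerProductSpace.toDual ℝ (EuclideanSpace ℝ (Fin p)) (G x)) x :=
      (hLd x).hasGradientAt.hasFDerivAt
    have := h1.add (hsq θ x)
    refine this.congr_fderiv ?_
    simp [map_add]
  have hgradJ : ∀ θ, gradient (J θ) = fun x => G x + lam • (x - θ) :=
    fun θ => gradient_eq (hJgrad θ)
  have hGθd : ∀ (θ x : EuclideanSpace ℝ (Fin p)),
      HasFDerivAt (fun y => G y + lam • (y - θ))
        (fderiv ℝ G x + lam • ContinuousLinearMap.id ℝ (EuclideanSpace ℝ (Fin p))) x :=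
    fun θ x => (hGdiff x).add (((hasFDerivAt_id x).sub_const θ).const_smul lam)
  have hfderivJ : ∀ θ x, fderiv ℝ (gradient (J θ)) x
      = fderiv ℝ G x + lam • ContinuousLinearMap.id ℝ (EuclideanSpace ℝ (Fin p)) := by
    intro θ x; rw [hgradJ θ]; exact (hGθd θ x).fderiv
  have hQ : ∀ (x v : EuclideanSpace ℝ (Fin p)), (lam - Lc) * ‖v‖ ^ 2 ≤
      ⟪(fderiv ℝ G x + lam • ContinuousLinearMap.id ℝ (EuclideanSpace ℝ (Fin p))) v, v⟫ := by
    intro x v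
    have h := (hL_hess x v).1
    simp only [ContinuousLinearMap.add_apply, ContinuousLinearMap.smul_apply,
      ContinuousLinearMap.id_apply, inner_add_left, real_inner_smul_left,
      real_inner_self_eq_norm_sq]
    nlinarith
  have hkey : ∀ θ x y, J θ x + ⟪G x + lam • (x - θ), y - x⟫
      + (lam - Lc) / 2 * ‖y - x‖ ^ 2 ≤ J θ y := by
    intro θ
    exact descent_ineq' (hJgrad θ) (hGθd θ) (fun x v => hQ x v)
  have hEU : ∀ θ, ∃! z : EuclideanSpace ℝ (Fin p), ∀ y, J θ z ≤ J θ y :=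
    fun θ => existsUnique_min' (by linarith) (hJgrad θ) (hkey θ)
  refine ⟨⟨?_, ?_, ?_⟩, ?_⟩
  · intro θ θ' v
    rw [hfderivJ θ θ']
    exact hQ θ' v
  · intro θ
    exact strongConvexOn_of_descent' (hkey θ)
  · exact hEU
  -- part (b)
  set θstar : EuclideanSpace ℝ (Fin p) → EuclideanSpace ℝ (Fin p) :=
    fun θ => (hEU θ).exists.choose with hθstardef
  have hmin : ∀ θ θ', J θ (θstar θ) ≤ J θ θ' := fun θ => (hEU θ).exists.choose_spec
  have huniq : ∀ θ z, (∀ y, J θ z ≤ J θ y) → z = θstar θ := by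
    intro θ z hz
    obtain ⟨w, hw, hu⟩ := hEU θ
    rw [hu z hz, hu (θstar θ) (hmin θ)]
  -- stationarity
  have hstat : ∀ θ, G (θstar θ) + lam • (θstar θ - θ) = 0 := by
    intro θ
    have hloc : IsLocalMin (J θ) (θstar θ) := Filter.Eventually.of_forall (hmin θ)
    have h0 := hloc.hasFDerivAt_eq_zero (hJgrad θ (θstar θ)).hasFDerivAt
    have h2 := congrArg (InnerProductSpace.toDual ℝ (EuclideanSpace ℝ (Fin p))).symm h0
    simpa using h2
  have hstat' : ∀ θ, G (θstar θ) = lam • (θ - θstar θ) := by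
    intro θ
    have h := hstat θ
    have h2 : G (θstar θ) = -(lam • (θstar θ - θ)) := eq_neg_of_add_eq_zero_left h
    rw [h2, ← smul_neg, neg_sub]
  -- symmetry of the Hessian
  have hHsymm : ∀ x (v w : EuclideanSpace ℝ (Fin p)),
      ⟪fderiv ℝ G x v, w⟫ = ⟪v, fderiv ℝ G x w⟫ := by
    intro x v w
    have hfd : ContDiff ℝ 1 (fderiv ℝ L) := hL_smooth.fderiv_right (by norm_num)
    have hx : HasFDerivAt (fderiv ℝ L) (fderiv ℝ (fderiv ℝ L) x) x :=
      ((hfd.differentiable one_ne_zero) x).hasFDerivAt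
    have hsymm := second_derivative_symmetric (fun y => (hLd y).hasFDerivAt) hx
    -- show ⟪fderiv G x u, z⟫ = f'' u z for all u z
    have hkey2 : ∀ z u : EuclideanSpace ℝ (Fin p),
        ⟪fderiv ℝ G x u, z⟫ = fderiv ℝ (fderiv ℝ L) x u z := by
      intro z u
      have h1 := (hGdiff x).inner ℝ (hasFDerivAt_const z x)
      have h2 := ((ContinuousLinearMap.apply ℝ ℝ z).hasFDerivAt).comp x hx
      have hfun : (fun y => ⟪G y, z⟫) = fun y => fderiv ℝ L y z := by
        funext y
        exact InnerProductSpace.toDual_symm_apply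
      rw [hfun] at h1
      have h3 := h1.unique h2
      have h4 := ContinuousLinearMap.ext_iff.1 h3 u
      simpa [fderivInnerCLM_apply] using h4
    calc ⟪fderiv ℝ G x v, w⟫ = fderiv ℝ (fderiv ℝ L) x v w := hkey2 w v
      _ = fderiv ℝ (fderiv ℝ L) x w v := hsymm v w
      _ = ⟪fderiv ℝ G x w, v⟫ := (hkey2 v w).symm
      _ = ⟪v, fderiv ℝ G x w⟫ := real_inner_comm _ _
  -- the operator K x and its inverse
  have hKinj : ∀ x : EuclideanSpace ℝ (Fin p), Function.Injective
      (fderiv ℝ G x + lam • ContinuousLinearMap.id ℝ (EuclideanSpace ℝ (Fin p))) := by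
    intro x v w hvw
    by_contra hne
    have h0 : (fderiv ℝ G x
        + lam • ContinuousLinearMap.id ℝ (EuclideanSpace ℝ (Fin p))) (v - w) = 0 := by
      rw [map_sub, hvw, sub_self]
    have h1 := hQ x (v - w)
    rw [h0] at h1
    simp only [inner_zero_left] at h1
    have hn : 0 < ‖v - w‖ := norm_pos_iff.2 (sub_ne_zero.2 hne)
    have h2 : 0 < (lam - Lc) * ‖v - w‖ ^ 2 :=
      mul_pos (by linarith) (pow_pos hn 2)
    linarith
  have hKbij : ∀ x : EuclideanSpace ℝ (Fin p), Function.Bijective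
      (fderiv ℝ G x + lam • ContinuousLinearMap.id ℝ (EuclideanSpace ℝ (Fin p))) := by
    intro x
    refine ⟨hKinj x, ?_⟩
    exact (LinearMap.injective_iff_surjective
      (f := ((fderiv ℝ G x + lam • ContinuousLinearMap.id ℝ (EuclideanSpace ℝ (Fin p)))
        : EuclideanSpace ℝ (Fin p) →ₗ[ℝ] EuclideanSpace ℝ (Fin p)))).1 (hKinj x)
  set Ke : EuclideanSpace ℝ (Fin p) → (EuclideanSpace ℝ (Fin p) ≃L[ℝ] EuclideanSpace ℝ (Fin p)) :=
    fun x => (LinearEquiv.ofBijective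
      ((fderiv ℝ G x + lam • ContinuousLinearMap.id ℝ (EuclideanSpace ℝ (Fin p)))
        : EuclideanSpace ℝ (Fin p) →ₗ[ℝ] EuclideanSpace ℝ (Fin p))
      (hKbij x)).toContinuousLinearEquiv with hKedef
  have hKe : ∀ x v, Ke x v
      = (fderiv ℝ G x + lam • ContinuousLinearMap.id ℝ (EuclideanSpace ℝ (Fin p))) v :=
    fun x v => rfl
  have hKeU : ∀ x : EuclideanSpace ℝ (Fin p),
      (fderiv ℝ G x + lam • ContinuousLinearMap.id ℝ (EuclideanSpace ℝ (Fin p)))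
        * ((Ke x).symm : EuclideanSpace ℝ (Fin p) →L[ℝ] EuclideanSpace ℝ (Fin p)) = 1 := by
    intro x
    refine ContinuousLinearMap.ext fun v => ?_
    rw [ContinuousLinearMap.mul_apply, ContinuousLinearMap.one_apply,
      ContinuousLinearEquiv.coe_coe, ← hKe x]
    exact (Ke x).apply_symm_apply v
  have hKeU' : ∀ x : EuclideanSpace ℝ (Fin p),
      ((Ke x).symm : EuclideanSpace ℝ (Fin p) →L[ℝ] EuclideanSpace ℝ (Fin p))
        * (fderiv ℝ G x + lam • ContinuousLinearMap.id ℝ (EuclideanSpace ℝ (Fin p))) = 1 := by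
    intro x
    refine ContinuousLinearMap.ext fun v => ?_
    rw [ContinuousLinearMap.mul_apply, ContinuousLinearMap.one_apply,
      ContinuousLinearEquiv.coe_coe, ← hKe x]
    exact (Ke x).symm_apply_apply v
  have hRinv : ∀ x : EuclideanSpace ℝ (Fin p),
      Ring.inverse (fderiv ℝ G x + lam • ContinuousLinearMap.id ℝ (EuclideanSpace ℝ (Fin p)))
        = ((Ke x).symm : EuclideanSpace ℝ (Fin p) →L[ℝ] EuclideanSpace ℝ (Fin p)) := by
    intro x
    exact Ring.inverse_unit
      ⟨fderiv ℝ G x + lam • ContinuousLinearMap.id ℝ (EuclideanSpace ℝ (Fin p)),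
        ((Ke x).symm : EuclideanSpace ℝ (Fin p) →L[ℝ] EuclideanSpace ℝ (Fin p)),
        hKeU x, hKeU' x⟩
  -- self-adjointness of K and its inverse
  have hKsymm : ∀ x (v w : EuclideanSpace ℝ (Fin p)),
      ⟪(fderiv ℝ G x + lam • ContinuousLinearMap.id ℝ (EuclideanSpace ℝ (Fin p))) v, w⟫
        = ⟪v, (fderiv ℝ G x + lam • ContinuousLinearMap.id ℝ (EuclideanSpace ℝ (Fin p))) w⟫ := by
    intro x v w
    rw [ContinuousLinearMap.add_apply, ContinuousLinearMap.add_apply,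
      ContinuousLinearMap.smul_apply, ContinuousLinearMap.smul_apply,
      ContinuousLinearMap.id_apply, ContinuousLinearMap.id_apply,
      inner_add_left, inner_add_right, real_inner_smul_left, real_inner_smul_right,
      hHsymm x v w]
  have hKeSymm : ∀ x (a b : EuclideanSpace ℝ (Fin p)),
      ⟪(Ke x).symm a, b⟫ = ⟪a, (Ke x).symm b⟫ := by
    intro x a b
    have h1 : b = (fderiv ℝ G x
        + lam • ContinuousLinearMap.id ℝ (EuclideanSpace ℝ (Fin p))) ((Ke x).symm b) := by
      rw [← hKe x]; exact ((Ke x).apply_symm_apply b).symm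
    have h2 : a = (fderiv ℝ G x
        + lam • ContinuousLinearMap.id ℝ (EuclideanSpace ℝ (Fin p))) ((Ke x).symm a) := by
      rw [← hKe x]; exact ((Ke x).apply_symm_apply a).symm
    calc ⟪(Ke x).symm a, b⟫
        = ⟪(Ke x).symm a, (fderiv ℝ G x + lam • ContinuousLinearMap.id ℝ
            (EuclideanSpace ℝ (Fin p))) ((Ke x).symm b)⟫ := by rw [← h1]
      _ = ⟪(fderiv ℝ G x + lam • ContinuousLinearMap.id ℝ
            (EuclideanSpace ℝ (Fin p))) ((Ke x).symm a), (Ke x).symm b⟫ :=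
          (hKsymm x _ _).symm
      _ = ⟪a, (Ke x).symm b⟫ := by rw [← h2]
  -- differentiability of θstar via the inverse function theorem
  have hθdiff : ∀ θ₀ : EuclideanSpace ℝ (Fin p),
      HasFDerivAt θstar (lam • (((Ke (θstar θ₀)).symm)
        : EuclideanSpace ℝ (Fin p) →L[ℝ] EuclideanSpace ℝ (Fin p))) θ₀ := by
    intro θ₀
    set Fm : EuclideanSpace ℝ (Fin p) × EuclideanSpace ℝ (Fin p)
        → EuclideanSpace ℝ (Fin p) × EuclideanSpace ℝ (Fin p) :=
      fun q => (q.1, G q.2 + lam • (q.2 - q.1)) with hFm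
    set DF : (EuclideanSpace ℝ (Fin p) × EuclideanSpace ℝ (Fin p))
        ≃L[ℝ] (EuclideanSpace ℝ (Fin p) × EuclideanSpace ℝ (Fin p)) :=
      (ContinuousLinearEquiv.refl ℝ (EuclideanSpace ℝ (Fin p))).skewProd (Ke (θstar θ₀))
        ((-lam) • ContinuousLinearMap.id ℝ (EuclideanSpace ℝ (Fin p))) with hDF
    have hGs : HasStrictFDerivAt G (fderiv ℝ G (θstar θ₀)) (θstar θ₀) :=
      (hGc.contDiffAt).hasStrictFDerivAt one_ne_zero
    have hstrict : HasStrictFDerivAt Fm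
        (DF : (EuclideanSpace ℝ (Fin p) × EuclideanSpace ℝ (Fin p))
          →L[ℝ] (EuclideanSpace ℝ (Fin p) × EuclideanSpace ℝ (Fin p))) (θ₀, θstar θ₀) := by
      have hfst := (ContinuousLinearMap.fst ℝ (EuclideanSpace ℝ (Fin p))
        (EuclideanSpace ℝ (Fin p))).hasStrictFDerivAt
        (x := ((θ₀, θstar θ₀) : EuclideanSpace ℝ (Fin p) × EuclideanSpace ℝ (Fin p)))
      have hsnd' : HasStrictFDerivAt
          (fun q : EuclideanSpace ℝ (Fin p) × EuclideanSpace ℝ (Fin p) => G q.2)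
          ((fderiv ℝ G (θstar θ₀)).comp
            (ContinuousLinearMap.snd ℝ (EuclideanSpace ℝ (Fin p)) (EuclideanSpace ℝ (Fin p))))
          (θ₀, θstar θ₀) :=
        hGs.comp ((θ₀, θstar θ₀) : EuclideanSpace ℝ (Fin p) × EuclideanSpace ℝ (Fin p))
          ((ContinuousLinearMap.snd ℝ (EuclideanSpace ℝ (Fin p))
            (EuclideanSpace ℝ (Fin p))).hasStrictFDerivAt)
      have hlin : HasStrictFDerivAt
          (fun q : EuclideanSpace ℝ (Fin p) × EuclideanSpace ℝ (Fin p) => lam • (q.2 - q.1))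
          (lam • ((ContinuousLinearMap.snd ℝ (EuclideanSpace ℝ (Fin p))
              (EuclideanSpace ℝ (Fin p)))
            - (ContinuousLinearMap.fst ℝ (EuclideanSpace ℝ (Fin p))
              (EuclideanSpace ℝ (Fin p))))) (θ₀, θstar θ₀) := by
        have := (((ContinuousLinearMap.snd ℝ (EuclideanSpace ℝ (Fin p))
            (EuclideanSpace ℝ (Fin p))).hasStrictFDerivAt
              (x := ((θ₀, θstar θ₀) : EuclideanSpace ℝ (Fin p) × EuclideanSpace ℝ (Fin p)))).sub
          ((ContinuousLinearMap.fst ℝ (EuclideanSpace ℝ (Fin p))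
            (EuclideanSpace ℝ (Fin p))).hasStrictFDerivAt)).const_smul lam
        exact this
      have hprod := hfst.prodMk (hsnd'.add hlin)
      have hDFeq : (DF : (EuclideanSpace ℝ (Fin p) × EuclideanSpace ℝ (Fin p))
            →L[ℝ] (EuclideanSpace ℝ (Fin p) × EuclideanSpace ℝ (Fin p)))
          = (ContinuousLinearMap.fst ℝ _ _).prod
            ((fderiv ℝ G (θstar θ₀)).comp (ContinuousLinearMap.snd ℝ _ _)
              + lam • ((ContinuousLinearMap.snd ℝ _ _) - (ContinuousLinearMap.fst ℝ _ _))) := by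
        refine ContinuousLinearMap.ext fun q => ?_
        show DF q = _
        refine Prod.ext ?_ ?_
        · simp only [hDF, ContinuousLinearEquiv.coe_coe, ContinuousLinearEquiv.skewProd_apply,
            ContinuousLinearEquiv.refl_apply, ContinuousLinearMap.prod_apply,
            ContinuousLinearMap.coe_fst']
        · simp only [hDF, ContinuousLinearEquiv.coe_coe, ContinuousLinearEquiv.skewProd_apply,
            ContinuousLinearEquiv.refl_apply, ContinuousLinearMap.prod_apply,
            ContinuousLinearMap.add_apply, ContinuousLinearMap.comp_apply,
            ContinuousLinearMap.smul_apply, ContinuousLinearMap.sub_apply,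
            ContinuousLinearMap.coe_fst', ContinuousLinearMap.coe_snd',
            ContinuousLinearMap.id_apply, ContinuousLinearMap.neg_apply, neg_smul]
          rw [hKe]
          simp only [ContinuousLinearMap.add_apply, ContinuousLinearMap.smul_apply,
            ContinuousLinearMap.id_apply]
          module
      rw [hDFeq]
      exact hprod
    have hF0 : Fm (θ₀, θstar θ₀) = (θ₀, 0) := by
      simp only [hFm]
      exact Prod.ext rfl (hstat θ₀)
    set gl := hstrict.localInverse Fm _ _ with hgl
    have hev : ∀ᶠ y in nhds ((θ₀, 0) : EuclideanSpace ℝ (Fin p) × EuclideanSpace ℝ (Fin p)),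
        Fm (gl y) = y := by
      have := hstrict.eventually_right_inverse
      rwa [hF0] at this
    have htend : Filter.Tendsto
        (fun θ : EuclideanSpace ℝ (Fin p) => ((θ, 0)
          : EuclideanSpace ℝ (Fin p) × EuclideanSpace ℝ (Fin p))) (nhds θ₀) (nhds (θ₀, 0)) :=
      (continuous_id.prodMk continuous_const).tendsto θ₀
    have hev2 : ∀ᶠ θ in nhds θ₀, Fm (gl (θ, 0)) = (θ, 0) := htend.eventually hev
    have heq : (fun θ => (gl (θ, 0)).2) =ᶠ[nhds θ₀] θstar := by
      filter_upwards [hev2] with θ hθ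
      have ha1 : (gl (θ, 0)).1 = θ := congrArg Prod.fst hθ
      have ha2 : G (gl (θ, 0)).2 + lam • ((gl (θ, 0)).2 - (gl (θ, 0)).1) = 0 :=
        congrArg Prod.snd hθ
      rw [ha1] at ha2
      have hminb : ∀ y, J θ (gl (θ, 0)).2 ≤ J θ y := by
        intro y
        have hk := hkey θ (gl (θ, 0)).2 y
        rw [ha2] at hk
        simp only [inner_zero_left, add_zero] at hk
        nlinarith [sq_nonneg ‖y - (gl (θ, 0)).2‖]
      exact huniq θ _ hminb
    have hgdiff : HasStrictFDerivAt gl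
        ((DF.symm : (EuclideanSpace ℝ (Fin p) × EuclideanSpace ℝ (Fin p))
          →L[ℝ] (EuclideanSpace ℝ (Fin p) × EuclideanSpace ℝ (Fin p)))) (θ₀, 0) := by
      have := hstrict.to_localInverse
      rwa [hF0] at this
    have hi : HasFDerivAt
        (fun θ : EuclideanSpace ℝ (Fin p) => ((θ, 0)
          : EuclideanSpace ℝ (Fin p) × EuclideanSpace ℝ (Fin p)))
        ((ContinuousLinearMap.id ℝ (EuclideanSpace ℝ (Fin p))).prod 0) θ₀ :=
      (hasFDerivAt_id θ₀).prodMk (hasFDerivAt_const (0 : EuclideanSpace ℝ (Fin p)) θ₀)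
    have h1 := (hgdiff.hasFDerivAt.comp θ₀ hi)
    have h2 := ((ContinuousLinearMap.snd ℝ (EuclideanSpace ℝ (Fin p))
      (EuclideanSpace ℝ (Fin p))).hasFDerivAt).comp θ₀ h1
    have h3 : HasFDerivAt (fun θ => (gl (θ, 0)).2)
        ((ContinuousLinearMap.snd ℝ (EuclideanSpace ℝ (Fin p))
            (EuclideanSpace ℝ (Fin p))).comp
          ((DF.symm : (EuclideanSpace ℝ (Fin p) × EuclideanSpace ℝ (Fin p))
            →L[ℝ] (EuclideanSpace ℝ (Fin p) × EuclideanSpace ℝ (Fin p))).comp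
            ((ContinuousLinearMap.id ℝ (EuclideanSpace ℝ (Fin p))).prod 0))) θ₀ := h2
    have h4 := (heq.hasFDerivAt_iff (f' := ((ContinuousLinearMap.snd ℝ _ _).comp
        ((DF.symm : (EuclideanSpace ℝ (Fin p) × EuclideanSpace ℝ (Fin p))
          →L[ℝ] (EuclideanSpace ℝ (Fin p) × EuclideanSpace ℝ (Fin p))).comp
          ((ContinuousLinearMap.id ℝ (EuclideanSpace ℝ (Fin p))).prod 0))))).1 h3
    have hDeq : ((ContinuousLinearMap.snd ℝ (EuclideanSpace ℝ (Fin p))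
          (EuclideanSpace ℝ (Fin p))).comp
        ((DF.symm : (EuclideanSpace ℝ (Fin p) × EuclideanSpace ℝ (Fin p))
          →L[ℝ] (EuclideanSpace ℝ (Fin p) × EuclideanSpace ℝ (Fin p))).comp
          ((ContinuousLinearMap.id ℝ (EuclideanSpace ℝ (Fin p))).prod 0)))
        = lam • (((Ke (θstar θ₀)).symm)
          : EuclideanSpace ℝ (Fin p) →L[ℝ] EuclideanSpace ℝ (Fin p)) := by
      refine ContinuousLinearMap.ext fun v => ?_
      rw [ContinuousLinearMap.comp_apply, ContinuousLinearMap.comp_apply]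
      simp only [hDF, ContinuousLinearMap.prod_apply, ContinuousLinearMap.id_apply,
        ContinuousLinearMap.zero_apply, ContinuousLinearEquiv.coe_coe,
        ContinuousLinearEquiv.skewProd_symm_apply, ContinuousLinearEquiv.refl_symm,
        ContinuousLinearEquiv.refl_apply, ContinuousLinearMap.smul_apply,
        ContinuousLinearMap.coe_snd', ContinuousLinearMap.neg_apply,
        ContinuousLinearMap.coe_smul', Pi.smul_apply, ContinuousLinearMap.coe_id',
        id_eq, zero_sub, neg_smul, neg_neg, map_smul]
    rw [hDeq] at h4
    exact h4
  -- assemble part (b)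
  refine ⟨θstar, hmin, ?_, ?_⟩
  · intro θ₀
    exact ((hLd (θstar θ₀)).hasFDerivAt.comp θ₀ (hθdiff θ₀)).differentiableAt
  · intro θ
    have hΦ : HasFDerivAt (fun θ'' => L (θstar θ''))
        ((fderiv ℝ L (θstar θ)).comp (lam • (((Ke (θstar θ)).symm)
          : EuclideanSpace ℝ (Fin p) →L[ℝ] EuclideanSpace ℝ (Fin p)))) θ :=
      (hLd (θstar θ)).hasFDerivAt.comp θ (hθdiff θ)
    rw [hRinv (θstar θ)]
    apply ext_inner_right ℝ
    intro v
    have hL1 : ∀ y : EuclideanSpace ℝ (Fin p), fderiv ℝ L (θstar θ) y = ⟪G (θstar θ), y⟫ := by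
      intro y
      rw [hGdef]
      exact (InnerProductSpace.toDual_symm_apply).symm
    calc ⟪gradient (fun θ'' => L (θstar θ'')) θ, v⟫
        = fderiv ℝ (fun θ'' => L (θstar θ'')) θ v := by
          rw [gradient]; exact InnerProductSpace.toDual_symm_apply
      _ = fderiv ℝ L (θstar θ) (lam • (Ke (θstar θ)).symm v) := by rw [hΦ.fderiv]; rfl
      _ = ⟪G (θstar θ), lam • (Ke (θstar θ)).symm v⟫ := hL1 _
      _ = lam * ⟪lam • (θ - θstar θ), (Ke (θstar θ)).symm v⟫ := by
          rw [real_inner_smul_right, hstat' θ]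
      _ = (lam * lam) * ⟪θ - θstar θ, (Ke (θstar θ)).symm v⟫ := by
          rw [real_inner_smul_left]; ring
      _ = (lam * lam) * ⟪(Ke (θstar θ)).symm (θ - θstar θ), v⟫ := by
          rw [hKeSymm]
      _ = ⟪lam ^ 2 • (((Ke (θstar θ)).symm)
            : EuclideanSpace ℝ (Fin p) →L[ℝ] EuclideanSpace ℝ (Fin p)) (θ - θstar θ), v⟫ := by
          rw [real_inner_smul_left]; ring_nf; rfl
end
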